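/- arXiv:1111.2170 — 4 statements merged into one kernel-verified Lean document; each statement's English description precedes it below -/
import Mathlib

section
/- For all n ≥ 0, the derangement cycle-counting polynomial satisfies the closed form d_n(β) = (-1)^n n! Σ_{i=0}^{n} (β^i/i!) C(-β, n-i), where C(-β, k) = (-β)(-β-1)···(-β-k+1)/k! is the generalized binomial coefficient. -/
open Finset

/-- Number of cycles of a permutation, counting fixed points as 1-cycles. -/
def permNumCycles {n : ℕ} (σ : Equiv.Perm (Fin n)) : ℕ :=
  σ.cycleType.card + (n - σ.cycleType.sum)

/-- `d_n(β) = Σ_{σ derangement of [n]} β^{K(σ)}`, with `β = X`. -/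
noncomputable def dPoly (n : ℕ) : Polynomial ℚ :=
  ∑ σ ∈ Finset.univ.filter (fun σ : Equiv.Perm (Fin n) => ∀ i, σ i ≠ i),
    Polynomial.X ^ permNumCycles σ

/-- Generalized binomial coefficient `C(p,k) = p(p-1)⋯(p-k+1)/k!` for a polynomial `p`. -/
noncomputable def genBinom (p : Polynomial ℚ) (k : ℕ) : Polynomial ℚ :=
  (k.factorial : ℚ)⁻¹ • ∏ j ∈ Finset.range k, (p - (j : ℚ) • 1)



section Aux
open Equiv Equiv.Perm Polynomial

variable {α : Type*} [Fintype α] [DecidableEq α]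

lemma support_swap_mul_cycle {c : Equiv.Perm α} (hc : c.IsCycle) {x y : α}
    (hx : x ∉ c.support) (hy : y ∈ c.support) :
    (Equiv.swap x y * c).support = insert x c.support := by
  have hxy : x ≠ y := fun h => hx (h ▸ hy)
  have hcx : c x = x := Equiv.Perm.notMem_support.mp hx
  ext z
  simp only [Equiv.Perm.mem_support, Finset.mem_insert, Equiv.Perm.mul_apply]
  rcases eq_or_ne z x with rfl | hzx
  · simp [hcx, Equiv.swap_apply_left, hxy.symm]
  · rcases em (z ∈ c.support) with hzs | hzs
    · have hczz : c z ≠ z := Equiv.Perm.mem_support.mp hzs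
      have hczx : c z ≠ x := fun h => hzx (c.injective (h.trans hcx.symm))
      rcases eq_or_ne (c z) y with h | h
      · rw [h, Equiv.swap_apply_right]
        simp [Ne.symm hzx, hzs, h ▸ hczz]
      · rw [Equiv.swap_apply_of_ne_of_ne hczx h]
        simp [hczz, hzs]
    · have hcz : c z = z := Equiv.Perm.notMem_support.mp hzs
      have hzy : z ≠ y := fun h => hzs (h ▸ hy)
      rw [hcz, Equiv.swap_apply_of_ne_of_ne hzx hzy]
      simp [hzs, hzx]

lemma isCycle_swap_mul_cycle {c : Equiv.Perm α} (hc : c.IsCycle) {x y : α}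
    (hx : x ∉ c.support) (hy : y ∈ c.support) : (Equiv.swap x y * c).IsCycle := by
  have hxy : x ≠ y := fun h => hx (h ▸ hy)
  have hcx : c x = x := Equiv.Perm.notMem_support.mp hx
  set h := Equiv.swap x y * c with hh
  have hx' : h x = y := by simp [hh, hcx]
  have key : ∀ k : ℕ, h.SameCycle x ((c ^ k) y) := by
    intro k
    induction k with
    | zero => exact ⟨1, by simpa using hx'⟩
    | succ k ih =>
      rcases eq_or_ne ((c ^ (k+1)) y) y with he | he
      · rw [he]; exact ⟨1, by simpa using hx'⟩
      · have hmem : (c ^ (k+1)) y ∈ c.support := Equiv.Perm.pow_apply_mem_support.mpr hy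
        have hne_x : (c ^ (k+1)) y ≠ x := fun hxx => hx (hxx ▸ hmem)
        have step : h ((c ^ k) y) = (c ^ (k+1)) y := by
          rw [hh]
          simp only [Equiv.Perm.mul_apply]
          rw [show c ((c ^ k) y) = (c ^ (k+1)) y by rw [pow_succ']; rfl]
          exact Equiv.swap_apply_of_ne_of_ne hne_x he
        exact ih.trans ⟨1, by simpa using step⟩
  refine ⟨x, by rw [hx']; exact hxy.symm, ?_⟩
  intro b hb
  have hbmem : b ∈ h.support := Equiv.Perm.mem_support.mpr hb
  rw [support_swap_mul_cycle hc hx hy, Finset.mem_insert] at hbmem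
  rcases hbmem with rfl | hbs
  · exact Equiv.Perm.SameCycle.refl _ _
  · obtain ⟨i, _, _, hi⟩ :=
      (hc.sameCycle (Equiv.Perm.mem_support.mp hy) (Equiv.Perm.mem_support.mp hbs)).exists_pow_eq c
    exact hi ▸ key i

/-- Joining a fixed point `x` into the permutation at `y` (in a cycle of `g`). -/
lemma cycleType_swap_mul_of_apply_ne {g : Equiv.Perm α} {x y : α} (hgx : g x = x) (hxy : x ≠ y)
    (hgy : g y ≠ y) :
    Multiset.card (Equiv.swap x y * g).cycleType = Multiset.card g.cycleType ∧
      (Equiv.swap x y * g).cycleType.sum = g.cycleType.sum + 1 := by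
  set c := g.cycleOf y with hcdef
  have hc : c.IsCycle := Equiv.Perm.isCycle_cycleOf g hgy
  have hyc : y ∈ c.support := by
    rw [hcdef, Equiv.Perm.mem_support_cycleOf_iff]
    exact ⟨Equiv.Perm.SameCycle.refl _ _, Equiv.Perm.mem_support.mpr hgy⟩
  have hxg : x ∉ g.support := Equiv.Perm.notMem_support.mpr hgx
  have hxc : x ∉ c.support := fun h => hxg (Equiv.Perm.support_cycleOf_le g y h)
  have hagree : ∀ w ∈ c.support, c w = g w := by
    intro w hw
    rw [hcdef, Equiv.Perm.mem_support_cycleOf_iff] at hw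
    exact hw.1.cycleOf_apply
  set t := g * c⁻¹ with htdef
  have hgt : g = t * c := by rw [htdef]; group
  have hdisj : t.Disjoint c := by
    intro z
    rcases em (z ∈ c.support) with hz | hz
    · left
      have h1 : c⁻¹ z ∈ c.support := by
        rw [← Equiv.Perm.support_inv] at hz ⊢
        exact (Equiv.Perm.apply_mem_support (f := c⁻¹)).mpr hz
      have : g (c⁻¹ z) = z := by rw [← hagree _ h1]; simp
      simpa [htdef, Equiv.Perm.mul_apply] using this
    · right; exact Equiv.Perm.notMem_support.mp hz
  have hcy : c y ≠ y := Equiv.Perm.mem_support.mp hyc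
  have hyt : t y = y := (hdisj y).resolve_right hcy
  have hcxx : c x = x := Equiv.Perm.notMem_support.mp hxc
  have hxt : t x = x := by
    have : c⁻¹ x = x := by rw [Equiv.Perm.inv_eq_iff_eq]; exact hcxx.symm
    simp [htdef, Equiv.Perm.mul_apply, this, hgx]
  have hswap_t : (Equiv.swap x y).Disjoint t := by
    intro z
    rcases eq_or_ne z x with rfl | hzx
    · right; exact hxt
    rcases eq_or_ne z y with rfl | hzy
    · right; exact hyt
    · left; exact Equiv.swap_apply_of_ne_of_ne hzx hzy
  have heq : Equiv.swap x y * g = t * (Equiv.swap x y * c) := by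
    rw [hgt, ← mul_assoc, hswap_t.commute.eq, mul_assoc]
  have hcyc : (Equiv.swap x y * c).IsCycle := isCycle_swap_mul_cycle hc hxc hyc
  have hsupp : (Equiv.swap x y * c).support = insert x c.support :=
    support_swap_mul_cycle hc hxc hyc
  have hdisj2 : t.Disjoint (Equiv.swap x y * c) := by
    rw [Equiv.Perm.disjoint_iff_disjoint_support] at hdisj ⊢
    rw [hsupp, Finset.disjoint_insert_right]
    refine ⟨fun hxmem => ?_, hdisj⟩
    exact (Equiv.Perm.mem_support.mp hxmem) hxt
  have h1 : (Equiv.swap x y * g).cycleType = t.cycleType + {c.support.card + 1} := by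
    rw [heq, hdisj2.cycleType_mul, hcyc.cycleType, hsupp, Finset.card_insert_of_notMem hxc]
  have h2 : g.cycleType = t.cycleType + {c.support.card} := by
    rw [hgt, hdisj.cycleType_mul, hc.cycleType]
  constructor <;> simp [h1, h2] <;> ring

lemma cycleType_swap_mul_of_apply_eq {g : Equiv.Perm α} {x y : α} (hgx : g x = x) (hxy : x ≠ y)
    (hgy : g y = y) :
    Multiset.card (Equiv.swap x y * g).cycleType = Multiset.card g.cycleType + 1 ∧
      (Equiv.swap x y * g).cycleType.sum = g.cycleType.sum + 2 := by
  have hdisj : (Equiv.swap x y).Disjoint g := by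
    intro z
    rcases eq_or_ne z x with rfl | hzx
    · right; exact hgx
    rcases eq_or_ne z y with rfl | hzy
    · right; exact hgy
    · left; exact Equiv.swap_apply_of_ne_of_ne hzx hzy
  have hst : (Equiv.swap x y).cycleType = {2} := by
    rw [(Equiv.Perm.isCycle_swap hxy).cycleType, Equiv.Perm.support_swap hxy]
    simp [Finset.card_insert_of_notMem, hxy]
  rw [hdisj.cycleType_mul, hst]
  constructor <;> simp <;> ring



variable {β : Type*} [Fintype β] [DecidableEq β]

lemma cycleType_permCongr (e : α ≃ β) (σ : Equiv.Perm α) :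
    (e.permCongr σ).cycleType = σ.cycleType := by
  have h : e.permCongr σ = σ.extendDomain (e.trans (Equiv.subtypeUnivEquiv
      (fun _ : β => trivial)).symm) := by
    ext b
    rw [Equiv.Perm.extendDomain_apply_subtype _ _ trivial]
    simp
  rw [h, Equiv.Perm.cycleType_extendDomain]

lemma cycleType_optionCongr (σ : Equiv.Perm α) :
    Equiv.Perm.cycleType (σ.optionCongr : Equiv.Perm (Option α)) = σ.cycleType := by
  have h : (σ.optionCongr : Equiv.Perm (Option α))
      = σ.extendDomain (Equiv.optionIsSomeEquiv α).symm := by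
    refine Equiv.Perm.ext fun o => ?_
    cases o with
    | none => rw [Equiv.Perm.extendDomain_apply_not_subtype _ _ (by simp)]; simp
    | some a =>
      have h2 := Equiv.Perm.extendDomain_apply_image σ (Equiv.optionIsSomeEquiv α).symm a
      simpa [Equiv.optionIsSomeEquiv] using h2.symm
  rw [h, Equiv.Perm.cycleType_extendDomain]

/-- cycle count, counting fixed points as 1-cycles -/
def KK (α : Type*) [Fintype α] [DecidableEq α] (σ : Equiv.Perm α) : ℕ :=
  Multiset.card σ.cycleType + (Fintype.card α - σ.cycleType.sum)

noncomputable def apol (α : Type*) [Fintype α] [DecidableEq α] : Polynomial ℚ :=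
  ∑ σ : Equiv.Perm α, X ^ KK α σ

noncomputable def dpol (α : Type*) [Fintype α] [DecidableEq α] : Polynomial ℚ :=
  ∑ σ ∈ univ.filter (fun σ : Equiv.Perm α => ∀ i, σ i ≠ i), X ^ Multiset.card σ.cycleType

lemma apol_congr (e : α ≃ β) : apol α = apol β := by
  rw [apol, apol]
  refine Fintype.sum_equiv e.permCongr _ _ (fun σ => ?_)
  rw [KK, KK, cycleType_permCongr, Fintype.card_congr e]

lemma dpol_congr (e : α ≃ β) : dpol α = dpol β := by
  rw [dpol, dpol]
  refine Finset.sum_nbij' (fun σ => e.permCongr σ) (fun τ => e.symm.permCongr τ) ?_ ?_ ?_ ?_ ?_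
  · intro σ hσ
    simp only [Finset.mem_filter, Finset.mem_univ, true_and] at hσ ⊢
    intro b h
    have := hσ (e.symm b)
    apply this
    apply_fun e
    simpa using h
  · intro τ hτ
    simp only [Finset.mem_filter, Finset.mem_univ, true_and] at hτ ⊢
    intro a h
    have := hτ (e a)
    apply this
    apply_fun e.symm
    simpa using h
  · intro σ _; ext a; simp
  · intro τ _; ext b; simp
  · intro σ _; rw [cycleType_permCongr]

lemma apol_option : apol (Option α) = (X + (Fintype.card α : Polynomial ℚ)) * apol α := by
  rw [apol]
  rw [← Equiv.sum_comp (Equiv.Perm.decomposeOption (α := α)).symm]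
  rw [Fintype.sum_prod_type]
  rw [Fintype.sum_option]
  have card_opt : Fintype.card (Option α) = Fintype.card α + 1 := by simp
  have hnone : ∀ σ : Equiv.Perm α,
      KK (Option α) (Equiv.Perm.decomposeOption.symm (none, σ)) = KK α σ + 1 := by
    intro σ
    rw [Equiv.Perm.decomposeOption_symm_apply]
    dsimp only
    rw [show Equiv.swap (none : Option α) none = 1
      from (Equiv.swap_self none).trans Equiv.Perm.one_def.symm, one_mul]
    rw [KK, KK, cycleType_optionCongr, card_opt]
    have hle : σ.cycleType.sum ≤ Fintype.card α := by
      rw [Equiv.Perm.sum_cycleType]; exact Finset.card_le_univ _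
    omega
  have hsome : ∀ (b : α) (σ : Equiv.Perm α),
      KK (Option α) (Equiv.Perm.decomposeOption.symm (some b, σ)) = KK α σ := by
    intro b σ
    rw [Equiv.Perm.decomposeOption_symm_apply]
    dsimp only
    have hgx : σ.optionCongr none = none := by simp
    have hxy : (none : Option α) ≠ some b := by simp
    have hsupp : Equiv.Perm.cycleType (σ.optionCongr : Equiv.Perm (Option α)) = σ.cycleType :=
      cycleType_optionCongr σ
    have hle : σ.cycleType.sum ≤ Fintype.card α := by
      rw [Equiv.Perm.sum_cycleType]; exact Finset.card_le_univ _
    rcases eq_or_ne (σ b) b with hb | hb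
    · have hgy : σ.optionCongr (some b) = some b := by simp [hb]
      obtain ⟨h1, h2⟩ := cycleType_swap_mul_of_apply_eq hgx hxy hgy
      rw [KK, KK, h1, h2, hsupp, card_opt]
      have hblt : σ.cycleType.sum < Fintype.card α := by
        rw [Equiv.Perm.sum_cycleType]
        refine Finset.card_lt_card ?_
        rw [Finset.ssubset_univ_iff]
        intro h
        have : b ∈ σ.support := h ▸ Finset.mem_univ b
        exact (Equiv.Perm.mem_support.mp this) hb
      omega
    · have hgy : σ.optionCongr (some b) ≠ some b := by simp [hb]
      obtain ⟨h1, h2⟩ := cycleType_swap_mul_of_apply_ne hgx hxy hgy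
      rw [KK, KK, h1, h2, hsupp, card_opt]
      omega
  calc (∑ σ : Equiv.Perm α, X ^ KK (Option α) (Equiv.Perm.decomposeOption.symm (none, σ))) +
        ∑ b : α, ∑ σ : Equiv.Perm α, X ^ KK (Option α) (Equiv.Perm.decomposeOption.symm (some b, σ))
      = (∑ σ : Equiv.Perm α, X ^ (KK α σ + 1)) + ∑ _b : α, ∑ σ : Equiv.Perm α, X ^ KK α σ := by
        congr 1
        · exact Finset.sum_congr rfl fun σ _ => by rw [hnone]
        · exact Finset.sum_congr rfl fun b _ => Finset.sum_congr rfl fun σ _ => by rw [hsome]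
    _ = (X + (Fintype.card α : Polynomial ℚ)) * apol α := by
        rw [Finset.sum_const, card_univ]
        rw [add_mul, apol]
        congr 1
        · rw [Finset.mul_sum]
          exact Finset.sum_congr rfl fun σ _ => by rw [pow_succ, mul_comm]
        · simp [nsmul_eq_mul]

noncomputable def RP (n : ℕ) : Polynomial ℚ :=
  ∏ j ∈ range n, (X + (j : ℚ) • 1)

lemma smul_one_nat (j : ℕ) : ((j : ℚ) • (1 : Polynomial ℚ)) = (j : Polynomial ℚ) := by
  rw [Polynomial.smul_eq_C_mul, mul_one, Polynomial.C_eq_natCast]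

lemma apol_fin : ∀ n : ℕ, apol (Fin n) = RP n := by
  intro n
  induction n with
  | zero =>
    rw [apol, RP]
    rw [show (univ : Finset (Equiv.Perm (Fin 0))) = {1} from by
      apply Finset.eq_singleton_iff_unique_mem.mpr
      exact ⟨Finset.mem_univ _, fun σ _ => Subsingleton.elim σ 1⟩]
    simp [KK]
  | succ n ih =>
    rw [apol_congr (finSuccEquiv n), apol_option, ih, RP, RP, Finset.prod_range_succ,
      smul_one_nat, Fintype.card_fin]
    ring

lemma dpol_eq_dPoly (n : ℕ) : dpol (Fin n) = dPoly n := by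
  rw [dpol, dPoly]
  refine Finset.sum_congr (by congr) fun σ hσ => ?_
  simp only [Finset.mem_filter] at hσ
  have hsupp : σ.support = univ := by
    ext a; simp [Equiv.Perm.mem_support, hσ.2 a]
  rw [permNumCycles, Equiv.Perm.sum_cycleType, hsupp, Finset.card_univ, Fintype.card_fin]
  simp

lemma lemB (n : ℕ) :
    apol (Fin n) = ∑ k ∈ range (n + 1), (n.choose k) • (X ^ k * dPoly (n - k)) := by
  have hinner : ∀ S : Finset (Fin n),
      (∑ σ ∈ univ.filter
          (fun σ : Equiv.Perm (Fin n) => univ.filter (fun a => σ a = a) = S),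
        X ^ KK (Fin n) σ) = X ^ S.card * dPoly (n - S.card) := by
    intro S
    have hScard : S.card ≤ n := by
      have := Finset.card_le_univ S
      simpa using this
    have hcardsub : Fintype.card {a : Fin n // a ∉ S} = n - S.card := by
      rw [Fintype.card_subtype_compl, Fintype.card_fin, Fintype.card_coe]
    have step1 : (∑ τ ∈ univ.filter (fun τ : Equiv.Perm {a : Fin n // a ∉ S} => ∀ i, τ i ≠ i),
        (X : Polynomial ℚ) ^ (Multiset.card τ.cycleType + S.card))
        = ∑ σ ∈ univ.filter
          (fun σ : Equiv.Perm (Fin n) => univ.filter (fun a => σ a = a) = S),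
          X ^ KK (Fin n) σ := by
      refine Finset.sum_bij (fun τ _ => Equiv.Perm.ofSubtype τ) ?_ ?_ ?_ ?_
      · intro τ hτ
        simp only [Finset.mem_filter, Finset.mem_univ, true_and] at hτ ⊢
        ext a
        simp only [Finset.mem_filter, Finset.mem_univ, true_and]
        constructor
        · intro h
          by_contra haS
          have h2 := Equiv.Perm.ofSubtype_apply_of_mem τ haS
          have h3 : τ ⟨a, haS⟩ = ⟨a, haS⟩ := Subtype.ext (by rw [← h2, h])
          exact hτ _ h3
        · intro haS
          exact Equiv.Perm.ofSubtype_apply_of_not_mem τ (by simpa using haS)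
      · intro τ₁ h₁ τ₂ h₂ heq
        ext x
        have h3 : Equiv.Perm.ofSubtype τ₁ ↑x = Equiv.Perm.ofSubtype τ₂ ↑x := by rw [heq]
        rw [Equiv.Perm.ofSubtype_apply_of_mem τ₁ x.2, Equiv.Perm.ofSubtype_apply_of_mem τ₂ x.2]
          at h3
        exact congrArg Fin.val (by simpa using h3)
      · intro σ hσ
        simp only [Finset.mem_filter, Finset.mem_univ, true_and] at hσ
        have hfix : ∀ a : Fin n, σ a = a ↔ a ∈ S := by
          intro a
          rw [← hσ]
          simp
        have h₁ : ∀ a : Fin n, (a ∉ S) ↔ (σ a ∉ S) := by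
          intro a
          constructor
          · intro haS hσaS
            have h2 : σ (σ a) = σ a := (hfix (σ a)).mpr hσaS
            have h3 : σ a = a := σ.injective h2
            exact haS ((hfix a).mp h3)
          · intro hσaS haS
            have h2 : σ a = a := (hfix a).mpr haS
            exact hσaS (h2.symm ▸ haS)
        refine ⟨σ.subtypePerm (fun a => (h₁ a).symm), ?_, ?_⟩
        · simp only [Finset.mem_filter, Finset.mem_univ, true_and]
          intro x hx
          have : σ (x : Fin n) = x := congrArg Subtype.val hx
          exact x.2 ((hfix x).mp this)
        · apply Equiv.Perm.ofSubtype_subtypePerm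
          intro x hx
          exact fun hxS => hx ((hfix x).mpr hxS)
      · intro τ hτ
        simp only [Finset.mem_filter, Finset.mem_univ, true_and] at hτ
        congr 1
        have hos : Equiv.Perm.cycleType (Equiv.Perm.ofSubtype τ) = τ.cycleType :=
          Equiv.Perm.cycleType_ofSubtype
        have hsup : τ.support = univ := by
          ext x; simp [Equiv.Perm.mem_support, hτ x]
        have hsum : τ.cycleType.sum = n - S.card := by
          rw [Equiv.Perm.sum_cycleType, hsup, Finset.card_univ, hcardsub]
        rw [KK, hos, hsum, Fintype.card_fin]
        omega
    rw [← step1]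
    have step2 : dpol {a : Fin n // a ∉ S} = dPoly (n - S.card) := by
      rw [← dpol_eq_dPoly]
      exact dpol_congr (Fintype.equivFinOfCardEq hcardsub)
    rw [← step2, dpol, Finset.mul_sum]
    exact Finset.sum_congr rfl fun τ _ => by rw [pow_add, mul_comm]
  calc apol (Fin n)
      = ∑ S : Finset (Fin n), ∑ σ ∈ univ.filter
          (fun σ : Equiv.Perm (Fin n) => univ.filter (fun a => σ a = a) = S),
          X ^ KK (Fin n) σ := by
        rw [apol, Finset.sum_fiberwise]
    _ = ∑ S : Finset (Fin n), X ^ S.card * dPoly (n - S.card) := by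
        exact Finset.sum_congr rfl fun S _ => hinner S
    _ = ∑ S ∈ (univ : Finset (Fin n)).powerset, X ^ S.card * dPoly (n - S.card) := by
        rw [Finset.powerset_univ]
    _ = ∑ k ∈ range (n + 1), (n.choose k) • (X ^ k * dPoly (n - k)) := by
        rw [Finset.sum_powerset_apply_card (fun m => X ^ m * dPoly (n - m))]
        simp [Finset.card_univ]

noncomputable def TP (m : ℕ) : Polynomial ℚ :=
  ((-1 : ℚ) ^ m * m.factorial) •
      ∑ i ∈ Finset.range (m + 1),
        (i.factorial : ℚ)⁻¹ • (Polynomial.X ^ i * genBinom (-Polynomial.X) (m - i))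

lemma genBinom_negX (k : ℕ) :
    genBinom (-X) k = ((-1 : ℚ) ^ k / k.factorial) • RP k := by
  rw [genBinom, RP]
  have h : ∀ j ∈ range k, (-X - (j : ℚ) • (1 : Polynomial ℚ)) = (-1) * (X + (j : ℚ) • 1) := by
    intro j _; ring
  rw [Finset.prod_congr rfl h, Finset.prod_mul_distrib, Finset.prod_const, Finset.card_range]
  have h2 : ((-1 : Polynomial ℚ)) ^ k = Polynomial.C ((-1 : ℚ) ^ k) := by
    simp
  rw [h2, ← Polynomial.smul_eq_C_mul, smul_smul]
  congr 1
  rw [div_eq_mul_inv]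
  ring

lemma TP_eq (m : ℕ) :
    TP m = ∑ i ∈ range (m + 1), ((-1 : ℚ) ^ i * (m.choose i)) • (X ^ i * RP (m - i)) := by
  rw [TP, Finset.smul_sum]
  refine Finset.sum_congr rfl fun i hi => ?_
  have him : i ≤ m := by simpa [Nat.lt_succ_iff] using hi
  rw [genBinom_negX, mul_smul_comm, smul_smul, smul_smul]
  congr 1
  have hfact : (m.choose i : ℚ) * i.factorial * (m - i).factorial = m.factorial := by
    exact_mod_cast congrArg (Nat.cast : ℕ → ℚ)
      (Nat.choose_mul_factorial_mul_factorial him)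
  have hsign : (-1 : ℚ) ^ (m - i) = (-1) ^ m * (-1) ^ i := by
    have : (-1 : ℚ) ^ (m - i) * (-1) ^ i = (-1) ^ m := by
      rw [← pow_add]; congr 1; omega
    have h4 : ((-1 : ℚ) ^ i) * ((-1 : ℚ) ^ i) = 1 := by
      rw [← pow_add, ← two_mul, pow_mul]; norm_num
    calc (-1 : ℚ) ^ (m - i) = (-1 : ℚ) ^ (m - i) * (((-1 : ℚ) ^ i) * ((-1 : ℚ) ^ i)) := by
          rw [h4, mul_one]
      _ = (-1) ^ m * (-1) ^ i := by rw [← mul_assoc, this]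
  have hi0 : (i.factorial : ℚ) ≠ 0 := Nat.cast_ne_zero.mpr (Nat.factorial_ne_zero i)
  have hmi0 : ((m - i).factorial : ℚ) ≠ 0 := Nat.cast_ne_zero.mpr (Nat.factorial_ne_zero _)
  rw [hsign]
  have hm2 : (-1 : ℚ) ^ m * (-1) ^ m = 1 := by
    rw [← pow_add, ← two_mul, pow_mul, neg_one_sq, one_pow]
  field_simp
  linear_combination (m.factorial : ℚ) * hm2 - hfact
lemma reindex_sum {M : Type*} [AddCommMonoid M] (f : ℕ → ℕ → M) (n : ℕ) :
    ∑ k ∈ range (n + 1), ∑ i ∈ range (n + 1 - k), f k i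
      = ∑ j ∈ range (n + 1), ∑ k ∈ range (j + 1), f k (j - k) := by
  rw [Finset.sum_sigma', Finset.sum_sigma']
  refine Finset.sum_nbij' (fun p => ⟨p.1 + p.2, p.1⟩) (fun p => ⟨p.2, p.1 - p.2⟩)
    ?_ ?_ ?_ ?_ ?_
  · rintro ⟨k, i⟩ h
    simp only [Finset.mem_sigma, Finset.mem_range] at h ⊢
    omega
  · rintro ⟨j, k⟩ h
    simp only [Finset.mem_sigma, Finset.mem_range] at h ⊢
    omega
  · rintro ⟨k, i⟩ h
    simp
  · rintro ⟨j, k⟩ h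
    simp only [Finset.mem_sigma, Finset.mem_range] at h
    simp [show k + (j - k) = j from by omega]
  · rintro ⟨k, i⟩ h
    simp only [Finset.mem_sigma, Finset.mem_range] at h
    simp only
    congr 1
    omega

lemma lemC (n : ℕ) :
    ∑ k ∈ range (n + 1), (n.choose k) • (X ^ k * TP (n - k)) = RP n := by
  have expand : ∀ k ∈ range (n + 1), (n.choose k) • (X ^ k * TP (n - k))
      = ∑ i ∈ range (n + 1 - k),
          ((n.choose k : ℚ) * ((-1 : ℚ) ^ i * ((n - k).choose i)))
            • (X ^ (k + i) * RP (n - k - i)) := by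
    intro k hk
    have hkn : k ≤ n := by simpa [Nat.lt_succ_iff] using hk
    rw [TP_eq, Finset.mul_sum, Finset.smul_sum, show n - k + 1 = n + 1 - k from by omega]
    refine Finset.sum_congr rfl fun i hi => ?_
    rw [mul_smul_comm, ← Nat.cast_smul_eq_nsmul ℚ, smul_smul, ← mul_assoc (X ^ k), ← pow_add]
  rw [Finset.sum_congr rfl expand,
    reindex_sum (fun k i => ((n.choose k : ℚ) * ((-1 : ℚ) ^ i * ((n - k).choose i)))
      • (X ^ (k + i) * RP (n - k - i))) n]
  have hjj : ∀ j ∈ range (n + 1),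
      (∑ k ∈ range (j + 1), ((n.choose k : ℚ) * ((-1 : ℚ) ^ (j - k) * ((n - k).choose (j - k))))
        • (X ^ (k + (j - k)) * RP (n - k - (j - k))))
      = (if j = 0 then (1 : ℚ) else 0) • (X ^ j * RP (n - j)) := by
    intro j hj
    have hjn : j ≤ n := by simpa [Nat.lt_succ_iff] using hj
    have h1 : ∀ k ∈ range (j + 1),
        ((n.choose k : ℚ) * ((-1 : ℚ) ^ (j - k) * ((n - k).choose (j - k))))
          • (X ^ (k + (j - k)) * RP (n - k - (j - k)))
        = ((n.choose k : ℚ) * ((-1 : ℚ) ^ (j - k) * ((n - k).choose (j - k))))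
          • (X ^ j * RP (n - j)) := by
      intro k hk
      have hkj : k ≤ j := by simpa [Nat.lt_succ_iff] using hk
      rw [show k + (j - k) = j from by omega, show n - k - (j - k) = n - j from by omega]
    rw [Finset.sum_congr rfl h1, ← Finset.sum_smul]
    congr 1
    have key : ∀ k ∈ range (j + 1),
        (n.choose k : ℚ) * ((-1 : ℚ) ^ (j - k) * ((n - k).choose (j - k)))
        = ((n.choose j : ℚ) * (-1 : ℚ) ^ j) * ((-1 : ℚ) ^ k * (j.choose k)) := by
      intro k hk
      have hkj : k ≤ j := by simpa [Nat.lt_succ_iff] using hk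
      have hcc := congrArg (Nat.cast : ℕ → ℚ) (Nat.choose_mul (n := n) hkj)
      push_cast at hcc
      have hk2 : (-1 : ℚ) ^ k * (-1) ^ k = 1 := by
        rw [← pow_add, ← two_mul, pow_mul, neg_one_sq, one_pow]
      have hs : (-1 : ℚ) ^ (j - k) = (-1) ^ j * (-1) ^ k := by
        have h5 : (-1 : ℚ) ^ (j - k) * (-1) ^ k = (-1) ^ j := by
          rw [← pow_add]; congr 1; omega
        calc (-1 : ℚ) ^ (j - k) = (-1 : ℚ) ^ (j - k) * ((-1 : ℚ) ^ k * (-1) ^ k) := by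
              rw [hk2, mul_one]
          _ = (-1) ^ j * (-1) ^ k := by rw [← mul_assoc, h5]
      rw [hs]
      linear_combination (-(-1 : ℚ) ^ j * (-1) ^ k) * hcc
    rw [Finset.sum_congr rfl key, ← Finset.mul_sum]
    have halt : ∑ k ∈ range (j + 1), (-1 : ℚ) ^ k * (j.choose k)
        = if j = 0 then (1 : ℚ) else 0 := by
      have h2 := congrArg (Int.cast : ℤ → ℚ) (@Int.alternating_sum_range_choose j)
      push_cast at h2
      convert h2 using 2
    rw [halt]
    by_cases h : j = 0
    · simp [h]
    · simp [h]
  rw [Finset.sum_congr rfl hjj]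
  rw [Finset.sum_eq_single 0 (fun b _ hb0 => by simp [hb0])
    (fun h => absurd (Finset.mem_range.mpr (Nat.succ_pos n)) h)]
  simp [RP]

theorem dPoly_eq_TP : ∀ n : ℕ, dPoly n = TP n := by
  intro n
  induction n using Nat.strong_induction_on with
  | _ n ih =>
    have h1 : ∑ k ∈ range (n + 1), (n.choose k) • (X ^ k * dPoly (n - k))
        = ∑ k ∈ range (n + 1), (n.choose k) • (X ^ k * TP (n - k)) := by
      rw [← lemB n, apol_fin n, lemC n]
    rw [Finset.sum_range_succ', Finset.sum_range_succ'] at h1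
    have h2 : ∀ k ∈ range n, (n.choose (k + 1)) • (X ^ (k + 1) * dPoly (n - (k + 1)))
        = (n.choose (k + 1)) • (X ^ (k + 1) * TP (n - (k + 1))) := by
      intro k hk
      have hkn : k < n := Finset.mem_range.mp hk
      rw [ih (n - (k + 1)) (by omega)]
    rw [Finset.sum_congr rfl h2] at h1
    have h3 := add_left_cancel h1
    simpa using h3

end Aux

/-- `d_n(β) = (-1)^n n! Σ_{i=0}^{n} (β^i/i!) C(-β, n-i)`. -/
theorem derangement_closed_form (n : ℕ) :
    dPoly n = ((-1 : ℚ) ^ n * n.factorial) •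
      ∑ i ∈ Finset.range (n + 1),
        (i.factorial : ℚ)⁻¹ • (Polynomial.X ^ i * genBinom (-Polynomial.X) (n - i)) := by
  rw [show (((-1 : ℚ) ^ n * n.factorial) •
      ∑ i ∈ Finset.range (n + 1),
        (i.factorial : ℚ)⁻¹ • (Polynomial.X ^ i * genBinom (-Polynomial.X) (n - i))) = TP n
    from by rw [TP]]
  exact dPoly_eq_TP n
end

section
/- (Genus zero Virasoro graph theorem) For each n ≥ 2, the rational function G_n^{(0)}(z_1,...,z_n) defined by the Zhu recursion equals the derangement sum Σ_{φ ∈ F_n} (C/2)^{K(φ)} Π_{i=1}^n (z_i - z_{φ(i)})^{-2}, where F_n is the set of derangements of {1,...,n} and K(φ) is the number of cycles of φ. -/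
open Finset

/-- The genus zero Virasoro generating functions `G_n^{(0)}`, defined by Zhu's
recursion: `G_0 = 1`, `G_1 = 0`, and
`G_n(z_1,…,z_n) = Σ_{k=2}^n [(z_1-z_k)⁻¹ ∂_{z_k} + 2(z_1-z_k)⁻²] G_{n-1}(z_2,…,z_n)
  + (C/2)(z_1-z_k)⁻⁴ G_{n-2}(z_2,…,ẑ_k,…,z_n)`. -/
noncomputable def G (Cc : ℂ) : (n : ℕ) → (Fin n → ℂ) → ℂ
  | 0, _ => 1
  | 1, _ => 0
  | n + 2, z =>
      ∑ k : Fin (n + 1),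
        ((z 0 - z k.succ)⁻¹ *
            deriv (fun t => G Cc (n + 1)
              (Function.update (fun j : Fin (n + 1) => z j.succ) k t)) (z k.succ) +
          2 * ((z 0 - z k.succ) ^ 2)⁻¹ * G Cc (n + 1) (fun j : Fin (n + 1) => z j.succ) +
          Cc / 2 * ((z 0 - z k.succ) ^ 4)⁻¹ *
            G Cc n (fun j : Fin n => z (k.succAbove j).succ))

open Equiv Equiv.Perm Function

/-- The set of derangements of `Fin m`, as a `Finset` of permutations. -/
def derF (m : ℕ) : Finset (Equiv.Perm (Fin m)) :=
  Finset.univ.filter (fun φ : Equiv.Perm (Fin m) => ∀ i, φ i ≠ i)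

/-- The weight attached to a permutation in the derangement sum. -/
noncomputable def termF (Cc : ℂ) {m : ℕ} (z : Fin m → ℂ) (ψ : Equiv.Perm (Fin m)) : ℂ :=
  (Cc / 2) ^ permNumCycles ψ * ∏ i, ((z i - z (ψ i)) ^ 2)⁻¹

/-- The derangement sum. -/
noncomputable def Dsum (Cc : ℂ) (n : ℕ) (z : Fin n → ℂ) : ℂ :=
  ∑ φ ∈ Finset.univ.filter (fun φ : Equiv.Perm (Fin n) => ∀ i, φ i ≠ i),
    (Cc / 2) ^ permNumCycles φ * ∏ i, ((z i - z (φ i)) ^ 2)⁻¹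

lemma Dsum_eq (Cc : ℂ) {m : ℕ} (z : Fin m → ℂ) :
    Dsum Cc m z = ∑ φ ∈ derF m, termF Cc z φ := rfl

/-! ### Cycle counting lemmas -/

lemma card_cycleType_swap_mul {α : Type*} [Fintype α] [DecidableEq α]
    (τ : Equiv.Perm α) (x q : α) (hx : τ x = x) (hq : τ q ≠ q) (hxq : x ≠ q) :
    (Equiv.swap x q * τ).cycleType.card = τ.cycleType.card := by
  classical
  set c : Perm α := τ.cycleOf q with hcdef
  set r : Perm α := c⁻¹ * τ with hrdef
  have hcr : c * r = τ := by rw [hrdef]; group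
  have hcapp : ∀ y, τ.SameCycle q y → c y = τ y := fun y h => by
    rw [hcdef, Equiv.Perm.cycleOf_apply, if_pos h]
  have hcapp' : ∀ y, ¬ τ.SameCycle q y → c y = y := fun y h => by
    rw [hcdef, Equiv.Perm.cycleOf_apply, if_neg h]
  have hcx : c x = x := by
    by_cases h : τ.SameCycle q x
    · rw [hcapp x h, hx]
    · exact hcapp' x h
  have hcq : c q = τ q := τ.cycleOf_apply_self q
  have hrx : r x = x := by
    rw [hrdef]
    simp only [Perm.mul_apply, hx]
    have : c⁻¹ (c x) = x := Equiv.symm_apply_apply c x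
    rwa [hcx] at this
  have hdisj : Equiv.Perm.Disjoint c r := by
    intro y
    by_cases h : τ.SameCycle q y
    · right
      rw [hrdef]
      simp only [Perm.mul_apply]
      rw [← hcapp y h]
      exact Equiv.symm_apply_apply c y
    · left; exact hcapp' y h
  set g : Perm α := Equiv.swap x q * c with hgdef
  have hgx : g x = q := by rw [hgdef]; simp [hcx]
  have hrq : r q = q := by
    have := hdisj q
    rcases this with h | h
    · rw [hcq] at h; exact absurd h hq
    · exact h
  have hdisj2 : Equiv.Perm.Disjoint g r := by
    intro y
    by_cases hr : r y = y
    · right; exact hr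
    · left
      have hcy : c y = y := ((hdisj y).resolve_right hr)
      have hyx : y ≠ x := fun h => hr (h ▸ hrx)
      have hyq : y ≠ q := fun h => hr (h ▸ hrq)
      rw [hgdef]
      simp only [Perm.mul_apply, hcy]
      exact Equiv.swap_apply_of_ne_of_ne hyx hyq
  have hcmq : c q ≠ q := by rw [hcq]; exact hq
  have hciscycle : c.IsCycle := Equiv.Perm.isCycle_cycleOf τ hq
  have step : ∀ u, c u ≠ u → g.SameCycle u (c u) := by
    intro u hu
    by_cases h : c u = q
    · have h1 : g u = x := by rw [hgdef]; simp [h]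
      have : (g ^ (2:ℤ)) u = c u := by
        have : g (g u) = c u := by rw [h1, hgx, h]
        simpa [zpow_two, sq, Perm.mul_apply] using this
      exact ⟨2, this⟩
    · have hcux : c u ≠ x := by
        intro hh
        have hux : u = x := by
          apply c.injective
          rw [hh, hcx]
        exact hu (by rw [hux, hcx])
      have : g u = c u := by
        rw [hgdef]; simp only [Perm.mul_apply]
        exact Equiv.swap_apply_of_ne_of_ne hcux h
      exact ⟨1, by simpa using this⟩
  have hmemsup : ∀ (m : ℤ), ((c ^ m) q) ∈ c.support := by
    intro m
    rw [Equiv.Perm.zpow_apply_mem_support, Equiv.Perm.mem_support]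
    exact hcmq
  have claim1 : ∀ (m : ℤ), g.SameCycle q ((c ^ m) q) := by
    intro m
    induction m using Int.induction_on with
    | zero => simpa using Equiv.Perm.SameCycle.refl g q
    | succ i ih =>
        have h1 : (c ^ ((i:ℤ) + 1)) q = c ((c ^ (i:ℤ)) q) := by
          rw [add_comm, zpow_add, zpow_one]; simp [Perm.mul_apply]
        have hu := Equiv.Perm.mem_support.mp (hmemsup i)
        exact h1 ▸ ih.trans (step _ hu)
    | pred i ih =>
        have hu := Equiv.Perm.mem_support.mp (hmemsup (-(i:ℤ) - 1))
        have h1 : c ((c ^ (-(i:ℤ) - 1)) q) = (c ^ (-(i:ℤ))) q := by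
          have h2 : c * (c ^ (-(i:ℤ) - 1)) = c ^ (-(i:ℤ)) := by group
          calc c ((c ^ (-(i:ℤ) - 1)) q) = (c * (c ^ (-(i:ℤ) - 1))) q := rfl
          _ = (c ^ (-(i:ℤ))) q := by rw [h2]
        have hstep := step _ hu
        rw [h1] at hstep
        have goal' : g.SameCycle q ((c ^ (-(i:ℤ) - 1)) q) := ih.trans hstep.symm
        have h3 : (-(i:ℤ) - 1) = -((i:ℤ)+1) := by ring
        exact h3 ▸ goal'
  have hgiscycle : g.IsCycle := by
    refine ⟨x, by rw [hgx]; exact fun h => hxq h.symm, ?_⟩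
    intro y hy
    by_cases hyx : y = x
    · exact hyx ▸ Equiv.Perm.SameCycle.refl g x
    · have hcy : c y ≠ y := by
        intro hcy
        by_cases hyq : y = q
        · exact hcmq (hyq ▸ hcy)
        · apply hy
          rw [hgdef]
          simp only [Perm.mul_apply, hcy]
          exact Equiv.swap_apply_of_ne_of_ne hyx hyq
      obtain ⟨m, hm⟩ := hciscycle.sameCycle hcmq hcy
      have hxqcyc : g.SameCycle x q := ⟨1, by simpa using hgx⟩
      exact hxqcyc.trans (hm ▸ claim1 m)
  have hone : (Equiv.swap x q * τ) = g * r := by rw [hgdef, mul_assoc, hcr]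
  have h2 : (Equiv.swap x q * τ).cycleType = g.cycleType + r.cycleType := by
    rw [hone]; exact hdisj2.cycleType_mul
  have h3 : τ.cycleType = c.cycleType + r.cycleType := by
    rw [← hcr]; exact hdisj.cycleType_mul
  rw [h2, h3, Multiset.card_add, Multiset.card_add, hgiscycle.cycleType, hciscycle.cycleType]
  simp

lemma permNumCycles_eq_card {m : ℕ} (σ : Perm (Fin m)) (h : ∀ i, σ i ≠ i) :
    permNumCycles σ = σ.cycleType.card := by
  have hsupp : σ.support = Finset.univ := by
    ext i; simp [Equiv.Perm.mem_support, h i]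
  rw [permNumCycles, Equiv.Perm.sum_cycleType, hsupp]
  simp

/-- extension of a permutation of `Fin (n+1)` to `Fin (n+2)` fixing `0`. -/
def ext0 {n : ℕ} (σ : Perm (Fin (n+1))) : Perm (Fin (n+2)) :=
  σ.extendDomain (finSuccAboveEquiv (0 : Fin (n+2)))

lemma ext0_zero {n : ℕ} (σ : Perm (Fin (n+1))) : ext0 σ 0 = 0 :=
  Equiv.Perm.extendDomain_apply_not_subtype _ _ (by simp)

lemma ext0_succ {n : ℕ} (σ : Perm (Fin (n+1))) (i : Fin (n+1)) :
    ext0 σ i.succ = (σ i).succ := by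
  have h := Equiv.Perm.extendDomain_apply_image σ (finSuccAboveEquiv (0 : Fin (n+2))) i
  simpa [ext0, finSuccAboveEquiv_apply, Fin.succAbove_zero] using h

/-- extension of a permutation of `Fin n` to `Fin (n+1)` fixing `k`. -/
def extk {n : ℕ} (k : Fin (n+1)) (ρ : Perm (Fin n)) : Perm (Fin (n+1)) :=
  ρ.extendDomain (finSuccAboveEquiv k)

lemma extk_self {n : ℕ} (k : Fin (n+1)) (ρ : Perm (Fin n)) : extk k ρ k = k :=
  Equiv.Perm.extendDomain_apply_not_subtype _ _ (by simp)

lemma extk_succAbove {n : ℕ} (k : Fin (n+1)) (ρ : Perm (Fin n)) (j : Fin n) :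
    extk k ρ (k.succAbove j) = k.succAbove (ρ j) := by
  have h := Equiv.Perm.extendDomain_apply_image ρ (finSuccAboveEquiv k) j
  simpa [extk, finSuccAboveEquiv_apply] using h

lemma decomposeFin_eq {n : ℕ} (p : Fin (n+2)) (σ : Perm (Fin (n+1))) :
    (Equiv.Perm.decomposeFin.symm (p, σ) : Perm (Fin (n+2))) = Equiv.swap 0 p * ext0 σ := by
  ext i
  refine Fin.cases ?_ ?_ i
  · simp [Perm.mul_apply, ext0_zero]
  · intro j
    simp [Perm.mul_apply, ext0_succ]

/-- The permutation of `Fin (n+2)` built from `σ` with `0 ↦ k+1`. -/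
def Psi {n : ℕ} (k : Fin (n+1)) (σ : Perm (Fin (n+1))) : Perm (Fin (n+2)) :=
  Equiv.Perm.decomposeFin.symm (k.succ, σ)

lemma Psi_zero {n : ℕ} (k : Fin (n+1)) (σ : Perm (Fin (n+1))) : Psi k σ 0 = k.succ := by
  simp [Psi]

lemma Psi_succ {n : ℕ} (k : Fin (n+1)) (σ : Perm (Fin (n+1))) (i : Fin (n+1)) :
    Psi k σ i.succ = if σ i = k then 0 else (σ i).succ := by
  rw [Psi, Equiv.Perm.decomposeFin_symm_apply_succ]
  by_cases h : σ i = k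
  · rw [h, Equiv.swap_apply_right]; simp
  · rw [if_neg h]
    exact Equiv.swap_apply_of_ne_of_ne (Fin.succ_ne_zero _)
      (fun hc => h (Fin.succ_injective _ hc))

lemma deranged_iff {n : ℕ} (k : Fin (n+1)) (σ : Perm (Fin (n+1))) :
    (∀ i, Psi k σ i ≠ i) ↔ (∀ i, σ i = k ∨ σ i ≠ i) := by
  constructor
  · intro H i
    by_cases h : σ i = k
    · exact Or.inl h
    · right
      intro hii
      apply H i.succ
      rw [Psi_succ, if_neg h, hii]
  · intro H i
    refine Fin.cases ?_ ?_ i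
    · rw [Psi_zero]
      exact (Fin.succ_ne_zero k)
    · intro j
      rw [Psi_succ]
      by_cases h : σ j = k
      · rw [if_pos h]; exact (Fin.succ_ne_zero j).symm
      · rw [if_neg h]
        intro hc
        exact ((H j).resolve_left h) (Fin.succ_injective _ hc)

lemma derangedB {n : ℕ} (k : Fin (n+1)) (σ : Perm (Fin (n+1))) (hk : σ k ≠ k) :
    (∀ i, Psi k σ i ≠ i) ↔ (∀ i, σ i ≠ i) := by
  rw [deranged_iff]
  constructor
  · intro H i
    rcases H i with h | h
    · intro hii
      rw [hii] at h
      subst h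
      exact hk hii
    · exact h
  · exact fun H i => Or.inr (H i)

lemma derangedA {n : ℕ} (k : Fin (n+1)) (σ : Perm (Fin (n+1))) (hk : σ k = k) :
    (∀ i, Psi k σ i ≠ i) ↔ (∀ j, j ≠ k → σ j ≠ j) := by
  rw [deranged_iff]
  constructor
  · intro H j hj
    rcases H j with h | h
    · exact fun _ => hj (σ.injective (h.trans hk.symm))
    · exact h
  · intro H i
    by_cases h : i = k
    · exact Or.inl (by rw [h, hk])
    · exact Or.inr (H i h)

lemma extk_deranged_off {n : ℕ} (k : Fin (n+1)) (ρ : Perm (Fin n)) (hρ : ∀ j, ρ j ≠ j) :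
    ∀ i, i ≠ k → extk k ρ i ≠ i := by
  intro i hi
  obtain ⟨j, rfl⟩ := Fin.exists_succAbove_eq hi
  rw [extk_succAbove]
  exact fun hc => hρ j (Fin.succAbove_right_injective hc)

lemma KB {n : ℕ} (k : Fin (n+1)) (σ : Perm (Fin (n+1))) (hσ : ∀ i, σ i ≠ i) :
    permNumCycles (Psi k σ) = permNumCycles σ := by
  have hψ : ∀ i, Psi k σ i ≠ i := (derangedB k σ (hσ k)).mpr hσ
  rw [permNumCycles_eq_card _ hψ, permNumCycles_eq_card _ hσ, Psi, decomposeFin_eq]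
  have hτ0 : ext0 σ (0 : Fin (n+2)) = 0 := ext0_zero σ
  have hτk : ext0 σ k.succ ≠ k.succ := by
    rw [ext0_succ]
    exact fun hc => hσ k (Fin.succ_injective _ hc)
  rw [card_cycleType_swap_mul (ext0 σ) 0 k.succ hτ0 hτk (Fin.succ_ne_zero k).symm]
  rw [ext0, Equiv.Perm.cycleType_extendDomain]

lemma KA {n : ℕ} (k : Fin (n+1)) (ρ : Perm (Fin n)) (hρ : ∀ j, ρ j ≠ j) :
    permNumCycles (Psi k (extk k ρ)) = permNumCycles ρ + 1 := by
  have hψ : ∀ i, Psi k (extk k ρ) i ≠ i :=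
    (derangedA k (extk k ρ) (extk_self k ρ)).mpr (extk_deranged_off k ρ hρ)
  rw [permNumCycles_eq_card _ hψ, permNumCycles_eq_card _ hρ, Psi, decomposeFin_eq]
  have hdisj : (Equiv.swap (0 : Fin (n+2)) k.succ).Disjoint (ext0 (extk k ρ)) := by
    intro y
    by_cases h0 : y = 0
    · right; rw [h0, ext0_zero]
    · by_cases hk : y = k.succ
      · right; rw [hk, ext0_succ, extk_self]
      · left; exact Equiv.swap_apply_of_ne_of_ne h0 hk
  rw [hdisj.cycleType_mul, Multiset.card_add,
    (isCycle_swap (Fin.succ_ne_zero k).symm).cycleType]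
  rw [ext0, Equiv.Perm.cycleType_extendDomain, extk, Equiv.Perm.cycleType_extendDomain]
  simp [add_comm]

/-! ### Analytic lemmas -/

lemma update_injective {m : ℕ} (w : Fin m → ℂ) (hw : Injective w) (k : Fin m) (t : ℂ)
    (ht : ∀ j, j ≠ k → t ≠ w j) : Injective (Function.update w k t) := by
  intro x y hxy
  by_cases hx : x = k <;> by_cases hy : y = k
  · rw [hx, hy]
  · rw [hx] at hxy; rw [Function.update_self, Function.update_of_ne hy] at hxy
    exact absurd hxy (ht y hy)
  · rw [hy] at hxy; rw [Function.update_self, Function.update_of_ne hx] at hxy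
    exact absurd hxy.symm (ht x hx)
  · rw [Function.update_of_ne hx, Function.update_of_ne hy] at hxy
    exact hw hxy

lemma eventually_update_injective {m : ℕ} (w : Fin m → ℂ) (hw : Injective w) (k : Fin m) :
    ∀ᶠ t in nhds (w k), Injective (Function.update w k t) := by
  have h : ∀ᶠ t in nhds (w k), ∀ j, j ≠ k → t ≠ w j := by
    rw [Filter.eventually_all]
    intro j
    by_cases hj : j = k
    · exact Filter.Eventually.of_forall (fun t hjk => absurd hj hjk)
    · exact (eventually_ne_nhds (hw.ne (Ne.symm hj))).mono (fun t ht _ => ht)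
  exact h.mono (fun t ht => update_injective w hw k t ht)

lemma deriv_scalar (cc R x y : ℂ) (hx : x ≠ 0) (hy : y ≠ 0) :
    cc * ((-2) * x⁻¹ + 2 * y⁻¹) * ((x ^ 2)⁻¹ * ((y ^ 2)⁻¹ * R))
      = cc * (-(2 * x ^ 1 * 1) / (x ^ 2) ^ 2 * ((y ^ 2)⁻¹ * R)
          + (x ^ 2)⁻¹ * (-(2 * y ^ 1 * (0 - 1)) / (y ^ 2) ^ 2 * R)) := by
  field_simp
  ring

set_option maxHeartbeats 1000000 in
lemma hasDerivAt_Dsum (Cc : ℂ) {m : ℕ} (w : Fin m → ℂ) (hw : Injective w) (k : Fin m) :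
    HasDerivAt (fun t => Dsum Cc m (Function.update w k t))
      (∑ φ ∈ derF m,
        (Cc / 2) ^ permNumCycles φ *
          ((-2) * (w k - w (φ k))⁻¹ + 2 * (w (φ⁻¹ k) - w k)⁻¹) *
            ∏ i, ((w i - w (φ i)) ^ 2)⁻¹) (w k) := by
  unfold Dsum derF
  apply HasDerivAt.fun_sum
  intro φ hφ
  have hφ' : ∀ i, φ i ≠ i := (Finset.mem_filter.mp hφ).2
  have hkφ : k ≠ φ k := fun h => hφ' k h.symm
  have hk2 : φ⁻¹ k ≠ k := by
    intro h
    apply hφ' k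
    conv_lhs => rw [← h]
    exact Equiv.apply_symm_apply φ k
  set b := w (φ k) with hb
  set a := w (φ⁻¹ k) with ha
  set t0 := w k with ht0
  set R : ℂ := ∏ i ∈ (Finset.univ.erase k).erase (φ⁻¹ k), ((w i - w (φ i)) ^ 2)⁻¹ with hR
  have hsplit : ∀ t : ℂ,
      (∏ i, ((Function.update w k t i - Function.update w k t (φ i)) ^ 2)⁻¹)
        = ((t - b) ^ 2)⁻¹ * (((a - t) ^ 2)⁻¹ * R) := by
    intro t
    rw [← Finset.mul_prod_erase Finset.univ _ (Finset.mem_univ k),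
      ← Finset.mul_prod_erase _ _ (Finset.mem_erase.mpr ⟨hk2, Finset.mem_univ _⟩)]
    congr 1
    · rw [Function.update_self, Function.update_of_ne (Ne.symm hkφ)]
    congr 1
    · rw [Function.update_of_ne hk2, Equiv.Perm.inv_def, Equiv.apply_symm_apply, Function.update_self]; rfl
    · apply Finset.prod_congr rfl
      intro i hi
      have hi1 : i ≠ φ⁻¹ k := (Finset.mem_erase.mp hi).1
      have hi2 : i ≠ k := (Finset.mem_erase.mp ((Finset.mem_erase.mp hi).2)).1
      have hi3 : φ i ≠ k := fun h => hi1 (by rw [← h, Equiv.Perm.inv_def, Equiv.symm_apply_apply])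
      rw [Function.update_of_ne hi2, Function.update_of_ne hi3]
  have hne1 : t0 - b ≠ 0 := sub_ne_zero.2 (hw.ne hkφ)
  have hne2 : a - t0 ≠ 0 := sub_ne_zero.2 (hw.ne hk2)
  have h1 : HasDerivAt (fun t : ℂ => ((t - b) ^ 2)⁻¹)
      (-(2 * (t0 - b) ^ 1 * 1) / ((t0 - b) ^ 2) ^ 2) t0 :=
    (((hasDerivAt_id t0).sub_const b).pow 2).inv (pow_ne_zero 2 hne1)
  have h2 : HasDerivAt (fun t : ℂ => ((a - t) ^ 2)⁻¹)
      (-(2 * (a - t0) ^ 1 * (0 - 1)) / ((a - t0) ^ 2) ^ 2) t0 :=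
    (((hasDerivAt_const t0 a).sub (hasDerivAt_id t0)).pow 2).inv (pow_ne_zero 2 hne2)
  have h5 := ((h1.mul (h2.mul_const R)).const_mul ((Cc / 2) ^ permNumCycles φ))
  have hfun : (fun t => (Cc / 2) ^ permNumCycles φ *
      ∏ i, ((Function.update w k t i - Function.update w k t (φ i)) ^ 2)⁻¹)
      = (fun t => (Cc / 2) ^ permNumCycles φ *
        (((t - b) ^ 2)⁻¹ * (((a - t) ^ 2)⁻¹ * R))) := funext fun t => by rw [hsplit t]
  rw [hfun]
  convert h5 using 1
  · rfl
  · rfl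
  have hP : (∏ i, ((w i - w (φ i)) ^ 2)⁻¹) = ((t0 - b) ^ 2)⁻¹ * (((a - t0) ^ 2)⁻¹ * R) := by
    have h := hsplit t0
    rwa [Function.update_eq_self] at h
  rw [hP]
  exact deriv_scalar ((Cc / 2) ^ permNumCycles φ) R (t0 - b) (a - t0) hne1 hne2

/-! ### Combinatorial reorganisation -/

lemma branchB (Cc : ℂ) {n : ℕ} (z : Fin (n+2) → ℂ) (k : Fin (n+1)) :
    (∑ σ ∈ Finset.univ.filter (fun σ : Perm (Fin (n+1)) => ¬ σ k = k),
      (if (∀ i, Psi k σ i ≠ i) then termF Cc z (Psi k σ) else 0))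
      = ∑ σ ∈ derF (n+1),
          (Cc / 2) ^ permNumCycles σ * ∏ i, ((z i - z (Psi k σ i)) ^ 2)⁻¹ := by
  classical
  have step1 : ∀ σ ∈ Finset.univ.filter (fun σ : Perm (Fin (n+1)) => ¬ σ k = k),
      (if (∀ i, Psi k σ i ≠ i) then termF Cc z (Psi k σ) else 0)
        = (if (∀ i, σ i ≠ i)
            then (Cc / 2) ^ permNumCycles σ * ∏ i, ((z i - z (Psi k σ i)) ^ 2)⁻¹ else 0) := by
    intro σ hσ
    have hk : σ k ≠ k := by
      have := (Finset.mem_filter.mp hσ).2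
      exact this
    by_cases hd : ∀ i, σ i ≠ i
    · rw [if_pos ((derangedB k σ hk).mpr hd), if_pos hd, termF, KB k σ hd]
    · rw [if_neg (fun H => hd ((derangedB k σ hk).mp H)), if_neg hd]
  rw [Finset.sum_congr rfl step1, ← Finset.sum_filter, Finset.filter_filter]
  apply Finset.sum_congr _ (fun _ _ => rfl)
  ext σ
  simp only [Finset.mem_filter, Finset.mem_univ, true_and, derF]
  exact ⟨fun h => h.2, fun h => ⟨h k, h⟩⟩

lemma branchA (Cc : ℂ) {n : ℕ} (z : Fin (n+2) → ℂ) (k : Fin (n+1)) :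
    (∑ σ ∈ Finset.univ.filter (fun σ : Perm (Fin (n+1)) => σ k = k),
      (if (∀ i, Psi k σ i ≠ i) then termF Cc z (Psi k σ) else 0))
      = ∑ ρ ∈ derF n,
          (Cc / 2) ^ (permNumCycles ρ + 1) * ∏ i, ((z i - z (Psi k (extk k ρ) i)) ^ 2)⁻¹ := by
  classical
  have step1 : ∀ σ ∈ Finset.univ.filter (fun σ : Perm (Fin (n+1)) => σ k = k),
      (if (∀ i, Psi k σ i ≠ i) then termF Cc z (Psi k σ) else 0)
        = (if (∀ j, j ≠ k → σ j ≠ j) then termF Cc z (Psi k σ) else 0) := by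
    intro σ hσ
    have hk : σ k = k := (Finset.mem_filter.mp hσ).2
    exact if_congr (derangedA k σ hk) rfl rfl
  rw [Finset.sum_congr rfl step1, ← Finset.sum_filter, Finset.filter_filter]
  symm
  apply Finset.sum_bij (i := fun (ρ : Perm (Fin n)) (_ : ρ ∈ derF n) => extk k ρ)
  · intro ρ hρ
    have hρ' : ∀ j, ρ j ≠ j := by
      have := Finset.mem_filter.mp hρ
      exact this.2
    simp only [Finset.mem_filter, Finset.mem_univ, true_and]
    exact ⟨extk_self k ρ, extk_deranged_off k ρ hρ'⟩
  · intro ρ1 h1 ρ2 h2 heq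
    ext j
    have := congrArg (fun σ : Perm (Fin (n+1)) => σ (k.succAbove j)) heq
    simp only [extk_succAbove] at this
    exact congrArg Fin.val (Fin.succAbove_right_injective this)
  · intro σ hσ
    obtain ⟨hσk, hσoff⟩ : σ k = k ∧ ∀ j, j ≠ k → σ j ≠ j := by
      have := Finset.mem_filter.mp hσ
      exact this.2
    have hiff : ∀ x : Fin (n+1), x ≠ k ↔ σ x ≠ k := by
      intro x
      constructor
      · intro hx hc
        exact hx (σ.injective (hc.trans hσk.symm))
      · intro hx hc
        exact hx (hc ▸ hσk)
    set π : Perm {x : Fin (n+1) // x ≠ k} := σ.subtypePerm (fun x => (hiff x).symm) with hπ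
    set ρ : Perm (Fin n) := ((finSuccAboveEquiv k).permCongr).symm π with hρdef
    have happ : ∀ j : Fin n, (extk k ρ) (k.succAbove j) = σ (k.succAbove j) := by
      intro j
      rw [extk_succAbove]
      have : ρ j = (finSuccAboveEquiv k).symm (π ((finSuccAboveEquiv k) j)) := rfl
      rw [this]
      have h2 : π ((finSuccAboveEquiv k) j) = ⟨σ (k.succAbove j),
          (hiff _).mp (k.succAbove_ne j)⟩ := by
        simp [hπ, Equiv.Perm.subtypePerm_apply, finSuccAboveEquiv_apply]
      rw [h2]
      have h3 : ∀ (x : {x : Fin (n+1) // x ≠ k}),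
          k.succAbove ((finSuccAboveEquiv k).symm x) = (x : Fin (n+1)) := by
        intro x
        have h4 := congrArg (Subtype.val) ((finSuccAboveEquiv k).apply_symm_apply x)
        rw [finSuccAboveEquiv_apply] at h4
        exact h4
      exact h3 _
    have hext : extk k ρ = σ := by
      ext x
      by_cases hx : x = k
      · rw [hx, extk_self, hσk]
      · obtain ⟨j, rfl⟩ := Fin.exists_succAbove_eq hx
        exact congrArg Fin.val (happ j)
    refine ⟨ρ, ?_, hext⟩
    · simp only [derF, Finset.mem_filter, Finset.mem_univ, true_and]
      intro j hj
      have h5 := hσoff (k.succAbove j) (k.succAbove_ne j)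
      rw [← hext, extk_succAbove] at h5
      exact h5 (congrArg k.succAbove hj)
  · intro ρ hρ
    have hρ' : ∀ j, ρ j ≠ j := by
      have := Finset.mem_filter.mp hρ
      exact this.2
    rw [termF, KA k ρ hρ']

lemma perA (Cc : ℂ) {n : ℕ} (z : Fin (n+2) → ℂ) (k : Fin (n+1)) :
    Cc / 2 * ((z 0 - z k.succ) ^ 4)⁻¹ * Dsum Cc n (fun j => z (k.succAbove j).succ)
      = ∑ ρ ∈ derF n,
          (Cc / 2) ^ (permNumCycles ρ + 1) *
            ∏ i, ((z i - z (Psi k (extk k ρ) i)) ^ 2)⁻¹ := by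
  rw [Dsum_eq, Finset.mul_sum]
  apply Finset.sum_congr rfl
  intro ρ _
  have hprod : (∏ i, ((z i - z (Psi k (extk k ρ) i)) ^ 2)⁻¹)
      = ((z 0 - z k.succ) ^ 2)⁻¹ * (((z k.succ - z 0) ^ 2)⁻¹ *
          ∏ j, ((z (k.succAbove j).succ - z (k.succAbove (ρ j)).succ) ^ 2)⁻¹) := by
    rw [Fin.prod_univ_succ, Psi_zero]
    congr 1
    rw [Fin.prod_univ_succAbove
      (fun i : Fin (n+1) => ((z i.succ - z (Psi k (extk k ρ) i.succ)) ^ 2)⁻¹) k]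
    congr 1
    · rw [Psi_succ, if_pos (extk_self k ρ)]
    · apply Finset.prod_congr rfl
      intro j _
      rw [Psi_succ, extk_succAbove, if_neg (k.succAbove_ne (ρ j))]
  rw [hprod, termF]
  rw [show ((z k.succ - z 0) ^ 2) = ((z 0 - z k.succ) ^ 2) from by ring]
  rw [show ((z 0 - z k.succ) ^ 4)⁻¹
      = ((z 0 - z k.succ) ^ 2)⁻¹ * ((z 0 - z k.succ) ^ 2)⁻¹ from by
    rw [← mul_inv, ← pow_add]]
  rw [pow_succ]
  ring

lemma edge_core (x y : ℂ) (hx : x ≠ 0) (hy : y ≠ 0) (hd : y - x ≠ 0) :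
    x⁻¹ * ((-2) * (y - x)⁻¹) * (((y - x) ^ 2)⁻¹) + (x ^ 2)⁻¹ * ((y - x) ^ 2)⁻¹
      + (y⁻¹ * (2 * (y - x)⁻¹) * (((y - x) ^ 2)⁻¹) + (y ^ 2)⁻¹ * ((y - x) ^ 2)⁻¹)
      = (y ^ 2)⁻¹ * (x ^ 2)⁻¹ := by
  have hu : x * x⁻¹ = 1 := mul_inv_cancel₀ hx
  have hv : y * y⁻¹ = 1 := mul_inv_cancel₀ hy
  have hw : (y - x) * (y - x)⁻¹ = 1 := mul_inv_cancel₀ hd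
  simp only [show ((y - x) ^ 2 : ℂ)⁻¹ = (y - x)⁻¹ * (y - x)⁻¹ from by rw [sq, mul_inv],
    show ((x : ℂ) ^ 2)⁻¹ = x⁻¹ * x⁻¹ from by rw [sq, mul_inv],
    show ((y : ℂ) ^ 2)⁻¹ = y⁻¹ * y⁻¹ from by rw [sq, mul_inv]]
  linear_combination
    (2*x⁻¹*(y-x)⁻¹^3*(1+(y*y⁻¹-1))^2 - 2*y⁻¹*(y-x)⁻¹^3*(2+(x*x⁻¹-1))
      - y⁻¹^2*(y-x)⁻¹^2*(2+(x*x⁻¹-1))) * hu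
    + (2*x⁻¹*(y-x)⁻¹^3*(2+(y*y⁻¹-1)) - x⁻¹^2*(y-x)⁻¹^2*(2+(y*y⁻¹-1))
      - 2*y⁻¹*(y-x)⁻¹^3*(1+(x*x⁻¹-1))^2) * hv
    + (x⁻¹^2*y⁻¹^2*(((y-x)*(y-x)⁻¹-1)^2+3*((y-x)*(y-x)⁻¹-1)+3)
      - x⁻¹^2*(y-x)⁻¹^2*(1+(y*y⁻¹-1))^2 - y⁻¹^2*(y-x)⁻¹^2*(1+(x*x⁻¹-1))^2) * hw

lemma edge_scalar (cc E x0 A B : ℂ) (h1 : x0 - A ≠ 0) (h2 : x0 - B ≠ 0) (h3 : A - B ≠ 0) :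
    (x0 - A)⁻¹ * (cc * ((-2) * (A - B)⁻¹) * (((A - B) ^ 2)⁻¹ * E))
        + ((x0 - A) ^ 2)⁻¹ * (cc * (((A - B) ^ 2)⁻¹ * E))
      + ((x0 - B)⁻¹ * (cc * (2 * (A - B)⁻¹) * (((A - B) ^ 2)⁻¹ * E))
        + ((x0 - B) ^ 2)⁻¹ * (cc * (((A - B) ^ 2)⁻¹ * E)))
      = cc * (((x0 - B) ^ 2)⁻¹ * (((A - x0) ^ 2)⁻¹ * E)) := by
  have h3' : (x0 - B) - (x0 - A) ≠ 0 := fun h => h3 (by linear_combination h)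
  have hcore := edge_core (x0 - A) (x0 - B) h1 h2 h3'
  rw [show ((A - x0) ^ 2) = ((x0 - A) ^ 2) from by ring]
  rw [show (A - B) = ((x0 - B) - (x0 - A)) from by ring]
  linear_combination (cc * E) * hcore

lemma perB (Cc : ℂ) {n : ℕ} (z : Fin (n+2) → ℂ) (hz : Function.Injective z)
    (φ : Perm (Fin (n+1))) (hφ : ∀ i, φ i ≠ i) :
    (∑ k : Fin (n+1),
      ((z 0 - z k.succ)⁻¹ *
        ((Cc / 2) ^ permNumCycles φ *
          ((-2) * (z k.succ - z (φ k).succ)⁻¹ + 2 * (z (φ⁻¹ k).succ - z k.succ)⁻¹) *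
            ∏ i, ((z i.succ - z (φ i).succ) ^ 2)⁻¹) +
        2 * ((z 0 - z k.succ) ^ 2)⁻¹ *
          ((Cc / 2) ^ permNumCycles φ * ∏ i, ((z i.succ - z (φ i).succ) ^ 2)⁻¹)))
      = ∑ k : Fin (n+1),
          (Cc / 2) ^ permNumCycles φ * ∏ i, ((z i - z (Psi k φ i)) ^ 2)⁻¹ := by
  classical
  set cc := (Cc / 2) ^ permNumCycles φ with hcc
  set P : ℂ := ∏ i, ((z i.succ - z (φ i).succ) ^ 2)⁻¹ with hPdef
  set s1 : Fin (n+1) → ℂ := fun k =>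
    (z 0 - z k.succ)⁻¹ * (cc * ((-2) * (z k.succ - z (φ k).succ)⁻¹) * P)
      + ((z 0 - z k.succ) ^ 2)⁻¹ * (cc * P) with hs1
  set s2 : Fin (n+1) → ℂ := fun k =>
    (z 0 - z k.succ)⁻¹ * (cc * (2 * (z (φ⁻¹ k).succ - z k.succ)⁻¹) * P)
      + ((z 0 - z k.succ) ^ 2)⁻¹ * (cc * P) with hs2
  have hsplit : ∀ k ∈ (Finset.univ : Finset (Fin (n+1))),
      ((z 0 - z k.succ)⁻¹ *
        (cc * ((-2) * (z k.succ - z (φ k).succ)⁻¹ + 2 * (z (φ⁻¹ k).succ - z k.succ)⁻¹) * P) +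
        2 * ((z 0 - z k.succ) ^ 2)⁻¹ * (cc * P)) = s1 k + s2 k := by
    intro k _
    simp only [hs1, hs2]
    ring
  rw [Finset.sum_congr rfl hsplit, Finset.sum_add_distrib]
  rw [show (∑ k, s2 k) = ∑ a, s2 (φ a) from (Equiv.sum_comp φ s2).symm]
  rw [show (∑ k : Fin (n+1), cc * ∏ i, ((z i - z (Psi k φ i)) ^ 2)⁻¹)
      = ∑ a, cc * ∏ i, ((z i - z (Psi (φ a) φ i)) ^ 2)⁻¹ from
      (Equiv.sum_comp φ (fun k => cc * ∏ i, ((z i - z (Psi k φ i)) ^ 2)⁻¹)).symm]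
  rw [← Finset.sum_add_distrib]
  apply Finset.sum_congr rfl
  intro a _
  have hfa : φ a ≠ a := hφ a
  have hinv : φ⁻¹ (φ a) = a := φ.symm_apply_apply a
  have hQ : (∏ i, ((z i - z (Psi (φ a) φ i)) ^ 2)⁻¹)
      = ((z 0 - z (φ a).succ) ^ 2)⁻¹ * (((z a.succ - z 0) ^ 2)⁻¹ *
          ∏ i ∈ Finset.univ.erase a, ((z i.succ - z (φ i).succ) ^ 2)⁻¹) := by
    rw [Fin.prod_univ_succ, Psi_zero]
    congr 1
    rw [← Finset.mul_prod_erase Finset.univ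
        (fun i : Fin (n+1) => ((z i.succ - z (Psi (φ a) φ i.succ)) ^ 2)⁻¹) (Finset.mem_univ a)]
    congr 1
    · rw [Psi_succ, if_pos rfl]
    · apply Finset.prod_congr rfl
      intro i hi
      have hia : i ≠ a := (Finset.mem_erase.mp hi).1
      rw [Psi_succ, if_neg (fun h => hia (φ.injective h))]
  have hPsplit : P = ((z a.succ - z (φ a).succ) ^ 2)⁻¹ *
      ∏ i ∈ Finset.univ.erase a, ((z i.succ - z (φ i).succ) ^ 2)⁻¹ := by
    rw [hPdef]
    exact (Finset.mul_prod_erase Finset.univ _ (Finset.mem_univ a)).symm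
  have hx : z 0 - z a.succ ≠ 0 := sub_ne_zero.2 (fun h => (Fin.succ_ne_zero a) (hz h).symm)
  have hy : z 0 - z (φ a).succ ≠ 0 :=
    sub_ne_zero.2 (fun h => (Fin.succ_ne_zero (φ a)) (hz h).symm)
  have hd : z a.succ - z (φ a).succ ≠ 0 :=
    sub_ne_zero.2 (fun h => hfa (Fin.succ_injective _ (hz h)).symm)
  simp only [hs1, hs2, hinv]
  rw [hQ, hPsplit]
  linear_combination edge_scalar cc
    (∏ i ∈ Finset.univ.erase a, ((z i.succ - z (φ i).succ) ^ 2)⁻¹)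
    (z 0) (z a.succ) (z (φ a).succ) hx hy hd

set_option maxHeartbeats 1000000 in
lemma key (Cc : ℂ) {n : ℕ} (z : Fin (n+2) → ℂ) (hz : Function.Injective z) :
    (∑ k : Fin (n+1),
      ((z 0 - z k.succ)⁻¹ *
          (∑ φ ∈ derF (n+1),
            (Cc / 2) ^ permNumCycles φ *
              ((-2) * (z k.succ - z (φ k).succ)⁻¹ + 2 * (z (φ⁻¹ k).succ - z k.succ)⁻¹) *
                ∏ i, ((z i.succ - z (φ i).succ) ^ 2)⁻¹) +
        2 * ((z 0 - z k.succ) ^ 2)⁻¹ * Dsum Cc (n+1) (fun j => z j.succ) +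
        Cc / 2 * ((z 0 - z k.succ) ^ 4)⁻¹ * Dsum Cc n (fun j => z (k.succAbove j).succ)))
      = Dsum Cc (n+2) z := by
  classical
  have hRHS : Dsum Cc (n+2) z
      = ∑ k : Fin (n+1),
          ((∑ σ ∈ Finset.univ.filter (fun σ : Perm (Fin (n+1)) => σ k = k),
              (if (∀ i, Psi k σ i ≠ i) then termF Cc z (Psi k σ) else 0))
            + ∑ σ ∈ Finset.univ.filter (fun σ : Perm (Fin (n+1)) => ¬ σ k = k),
              (if (∀ i, Psi k σ i ≠ i) then termF Cc z (Psi k σ) else 0)) := by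
    have h1 : Dsum Cc (n+2) z
        = ∑ ψ : Perm (Fin (n+2)), (if (∀ i, ψ i ≠ i) then termF Cc z ψ else 0) :=
      Finset.sum_filter _ _
    rw [h1, ← Equiv.sum_comp (Equiv.Perm.decomposeFin.symm :
          (Fin (n+2) × Perm (Fin (n+1))) ≃ Perm (Fin (n+2)))
        (fun ψ => if (∀ i, ψ i ≠ i) then termF Cc z ψ else 0), Fintype.sum_prod_type,
      Fin.sum_univ_succ]
    have h0 : (∑ σ : Perm (Fin (n+1)),
        if (∀ i, (Equiv.Perm.decomposeFin.symm ((0 : Fin (n+2)), σ) : Perm (Fin (n+2))) i ≠ i)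
          then termF Cc z (Equiv.Perm.decomposeFin.symm (0, σ)) else 0) = 0 := by
      apply Finset.sum_eq_zero
      intro σ _
      rw [if_neg]
      intro H
      exact H 0 (by simp)
    rw [h0, zero_add]
    apply Finset.sum_congr rfl
    intro k _
    exact (Finset.sum_filter_add_sum_filter_not Finset.univ
      (fun σ : Perm (Fin (n+1)) => σ k = k) _).symm
  have hT3 : (∑ k : Fin (n+1),
      Cc / 2 * ((z 0 - z k.succ) ^ 4)⁻¹ * Dsum Cc n (fun j => z (k.succAbove j).succ))
      = ∑ k : Fin (n+1), ∑ ρ ∈ derF n,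
          (Cc / 2) ^ (permNumCycles ρ + 1) * ∏ i, ((z i - z (Psi k (extk k ρ) i)) ^ 2)⁻¹ :=
    Finset.sum_congr rfl (fun k _ => perA Cc z k)
  have hT12 : (∑ k : Fin (n+1),
      ((z 0 - z k.succ)⁻¹ *
          (∑ φ ∈ derF (n+1),
            (Cc / 2) ^ permNumCycles φ *
              ((-2) * (z k.succ - z (φ k).succ)⁻¹ + 2 * (z (φ⁻¹ k).succ - z k.succ)⁻¹) *
                ∏ i, ((z i.succ - z (φ i).succ) ^ 2)⁻¹) +
        2 * ((z 0 - z k.succ) ^ 2)⁻¹ * Dsum Cc (n+1) (fun j => z j.succ)))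
      = ∑ k : Fin (n+1), ∑ σ ∈ derF (n+1),
          (Cc / 2) ^ permNumCycles σ * ∏ i, ((z i - z (Psi k σ i)) ^ 2)⁻¹ := by
    have h1 : ∀ k ∈ (Finset.univ : Finset (Fin (n+1))),
        ((z 0 - z k.succ)⁻¹ *
          (∑ φ ∈ derF (n+1),
            (Cc / 2) ^ permNumCycles φ *
              ((-2) * (z k.succ - z (φ k).succ)⁻¹ + 2 * (z (φ⁻¹ k).succ - z k.succ)⁻¹) *
                ∏ i, ((z i.succ - z (φ i).succ) ^ 2)⁻¹) +
          2 * ((z 0 - z k.succ) ^ 2)⁻¹ * Dsum Cc (n+1) (fun j => z j.succ))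
        = ∑ φ ∈ derF (n+1),
            ((z 0 - z k.succ)⁻¹ *
              ((Cc / 2) ^ permNumCycles φ *
                ((-2) * (z k.succ - z (φ k).succ)⁻¹ + 2 * (z (φ⁻¹ k).succ - z k.succ)⁻¹) *
                  ∏ i, ((z i.succ - z (φ i).succ) ^ 2)⁻¹) +
              2 * ((z 0 - z k.succ) ^ 2)⁻¹ *
                ((Cc / 2) ^ permNumCycles φ * ∏ i, ((z i.succ - z (φ i).succ) ^ 2)⁻¹)) := by
      intro k _
      rw [Dsum_eq, Finset.mul_sum, Finset.mul_sum, ← Finset.sum_add_distrib]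
      exact Finset.sum_congr rfl (fun φ _ => rfl)
    refine (Finset.sum_congr rfl h1).trans ?_
    refine Finset.sum_comm.trans ?_
    refine (Finset.sum_congr rfl (fun φ hφ =>
      perB Cc z hz φ ((Finset.mem_filter.mp hφ).2))).trans ?_
    exact Finset.sum_comm
  calc (∑ k : Fin (n+1),
      ((z 0 - z k.succ)⁻¹ *
          (∑ φ ∈ derF (n+1),
            (Cc / 2) ^ permNumCycles φ *
              ((-2) * (z k.succ - z (φ k).succ)⁻¹ + 2 * (z (φ⁻¹ k).succ - z k.succ)⁻¹) *
                ∏ i, ((z i.succ - z (φ i).succ) ^ 2)⁻¹) +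
        2 * ((z 0 - z k.succ) ^ 2)⁻¹ * Dsum Cc (n+1) (fun j => z j.succ) +
        Cc / 2 * ((z 0 - z k.succ) ^ 4)⁻¹ * Dsum Cc n (fun j => z (k.succAbove j).succ)))
      = (∑ k : Fin (n+1),
          ((z 0 - z k.succ)⁻¹ *
            (∑ φ ∈ derF (n+1),
              (Cc / 2) ^ permNumCycles φ *
                ((-2) * (z k.succ - z (φ k).succ)⁻¹ + 2 * (z (φ⁻¹ k).succ - z k.succ)⁻¹) *
                  ∏ i, ((z i.succ - z (φ i).succ) ^ 2)⁻¹) +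
            2 * ((z 0 - z k.succ) ^ 2)⁻¹ * Dsum Cc (n+1) (fun j => z j.succ)))
        + ∑ k : Fin (n+1),
            Cc / 2 * ((z 0 - z k.succ) ^ 4)⁻¹ * Dsum Cc n (fun j => z (k.succAbove j).succ) :=
      Finset.sum_add_distrib
    _ = (∑ k : Fin (n+1), ∑ σ ∈ derF (n+1),
          (Cc / 2) ^ permNumCycles σ * ∏ i, ((z i - z (Psi k σ i)) ^ 2)⁻¹)
        + ∑ k : Fin (n+1), ∑ ρ ∈ derF n,
            (Cc / 2) ^ (permNumCycles ρ + 1) * ∏ i, ((z i - z (Psi k (extk k ρ) i)) ^ 2)⁻¹ := by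
      rw [hT12, hT3]
    _ = ∑ k : Fin (n+1),
          ((∑ ρ ∈ derF n,
            (Cc / 2) ^ (permNumCycles ρ + 1) * ∏ i, ((z i - z (Psi k (extk k ρ) i)) ^ 2)⁻¹)
          + ∑ σ ∈ derF (n+1),
            (Cc / 2) ^ permNumCycles σ * ∏ i, ((z i - z (Psi k σ i)) ^ 2)⁻¹) := by
      rw [add_comm, ← Finset.sum_add_distrib]
    _ = Dsum Cc (n+2) z := by
      rw [hRHS]
      exact Finset.sum_congr rfl (fun k _ => by rw [branchA Cc z k, branchB Cc z k])

lemma Dsum_zero (Cc : ℂ) (z : Fin 0 → ℂ) : Dsum Cc 0 z = 1 := by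
  rw [Dsum]
  rw [Finset.filter_true_of_mem (fun φ _ => fun i => i.elim0)]
  rw [show (Finset.univ : Finset (Perm (Fin 0))) = {1} from by
    apply Finset.eq_singleton_iff_unique_mem.mpr
    exact ⟨Finset.mem_univ 1, fun σ _ => Equiv.ext (fun i => i.elim0)⟩]
  rw [Finset.sum_singleton]
  simp [permNumCycles]

lemma Dsum_one (Cc : ℂ) (z : Fin 1 → ℂ) : Dsum Cc 1 z = 0 := by
  rw [Dsum, Finset.filter_false_of_mem, Finset.sum_empty]
  intro σ _ H
  exact H 0 (Subsingleton.elim _ _)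

theorem G_eq_Dsum (Cc : ℂ) :
    ∀ n (z : Fin n → ℂ), Function.Injective z → G Cc n z = Dsum Cc n z := by
  intro n
  induction n using Nat.strong_induction_on with
  | _ n ih =>
    rcases n with _ | _ | m
    · intro z _
      rw [show G Cc 0 z = 1 from rfl, Dsum_zero]
    · intro z _
      rw [show G Cc 1 z = 0 from rfl, Dsum_one]
    · intro z hz
      have hwinj : Function.Injective (fun j : Fin (m+1) => z j.succ) :=
        fun a b h => Fin.succ_injective _ (hz h)
      have hterm : ∀ k ∈ (Finset.univ : Finset (Fin (m+1))),
          ((z 0 - z k.succ)⁻¹ *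
            deriv (fun t => G Cc (m + 1)
              (Function.update (fun j : Fin (m + 1) => z j.succ) k t)) (z k.succ) +
          2 * ((z 0 - z k.succ) ^ 2)⁻¹ * G Cc (m + 1) (fun j : Fin (m + 1) => z j.succ) +
          Cc / 2 * ((z 0 - z k.succ) ^ 4)⁻¹ *
            G Cc m (fun j : Fin m => z (k.succAbove j).succ))
          = ((z 0 - z k.succ)⁻¹ *
            (∑ φ ∈ derF (m+1),
              (Cc / 2) ^ permNumCycles φ *
                ((-2) * (z k.succ - z (φ k).succ)⁻¹ + 2 * (z (φ⁻¹ k).succ - z k.succ)⁻¹) *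
                  ∏ i, ((z i.succ - z (φ i).succ) ^ 2)⁻¹) +
            2 * ((z 0 - z k.succ) ^ 2)⁻¹ * Dsum Cc (m+1) (fun j => z j.succ) +
            Cc / 2 * ((z 0 - z k.succ) ^ 4)⁻¹ * Dsum Cc m (fun j => z (k.succAbove j).succ)) := by
        intro k _
        have hev : (fun t => G Cc (m + 1)
            (Function.update (fun j : Fin (m + 1) => z j.succ) k t))
            =ᶠ[nhds (z k.succ)] (fun t => Dsum Cc (m + 1)
              (Function.update (fun j : Fin (m + 1) => z j.succ) k t)) :=
          (eventually_update_injective (fun j : Fin (m+1) => z j.succ) hwinj k).mono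
            (fun t ht => ih (m+1) (by omega) _ ht)
        have hder : deriv (fun t => G Cc (m + 1)
            (Function.update (fun j : Fin (m + 1) => z j.succ) k t)) (z k.succ)
            = ∑ φ ∈ derF (m+1),
              (Cc / 2) ^ permNumCycles φ *
                ((-2) * (z k.succ - z (φ k).succ)⁻¹ + 2 * (z (φ⁻¹ k).succ - z k.succ)⁻¹) *
                  ∏ i, ((z i.succ - z (φ i).succ) ^ 2)⁻¹ :=
          hev.deriv_eq.trans
            (hasDerivAt_Dsum Cc (fun j : Fin (m+1) => z j.succ) hwinj k).deriv
        rw [hder, ih (m+1) (by omega) _ hwinj,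
          ih m (by omega) (fun j : Fin m => z (k.succAbove j).succ)
            (fun a b h => Fin.succAbove_right_injective (Fin.succ_injective _ (hz h)))]
      rw [G, Finset.sum_congr rfl hterm]
      exact key Cc z hz

/-- for `n ≥ 2` and pairwise distinct `z_i`,
`G_n^{(0)}(z_1,…,z_n) = Σ_{φ ∈ F_n} (C/2)^{K(φ)} Π_i (z_i - z_{φ(i)})^{-2}`,
summing over derangements `φ`. -/
theorem G_eq_derangement_sum (Cc : ℂ) (n : ℕ) (hn : 2 ≤ n)
    (z : Fin n → ℂ) (hz : Function.Injective z) :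
    G Cc n z =
      ∑ φ ∈ Finset.univ.filter (fun φ : Equiv.Perm (Fin n) => ∀ i, φ i ≠ i),
        (Cc / 2) ^ permNumCycles φ * ∏ i, ((z i - z (φ i)) ^ 2)⁻¹ := by
  exact G_eq_Dsum Cc n z hz
end

section
/- The partial permutation counting polynomials satisfy the recursion p_{n+1}(α,β) = (2n + α + β) p_n(α,β) - n(n + β - 1) p_{n-1}(α,β), with p_{-1}(α,β) = 0 and p_0(α,β) = 1. -/
open Finset PowerSeries

/-- One step of a partial map `f`, extended to `Option`. -/
def optStep {n : ℕ} (f : Fin n → Option (Fin n)) : Option (Fin n) → Option (Fin n)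
  | none => none
  | some i => f i

/-- `i` lies on a cycle of the functional graph of `f`. -/
def isCyclic {n : ℕ} (f : Fin n → Option (Fin n)) (i : Fin n) : Prop :=
  ∃ k : ℕ, 0 < k ∧ (optStep f)^[k] (some i) = some i

/-- The number of cycles of the functional graph of a partial permutation `f`:
each cycle is counted by its minimal element. -/
noncomputable def numCyclesPP {n : ℕ} (f : Fin n → Option (Fin n)) : ℕ :=
  Nat.card {i : Fin n // isCyclic f i ∧
    ∀ j : Fin n, (∃ k : ℕ, (optStep f)^[k] (some i) = some j) → i ≤ j}

/-- The number of necklaces (maximal directed paths, including isolated points) of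
the functional graph of a partial permutation `f`: each necklace is counted by its
unique end vertex of outdegree 0. -/
noncomputable def numNecklacesPP {n : ℕ} (f : Fin n → Option (Fin n)) : ℕ :=
  Nat.card {i : Fin n // f i = none}

/-- `f` is a partial permutation: injective where defined. -/
def IsPartialPerm {n : ℕ} (f : Fin n → Option (Fin n)) : Prop :=
  ∀ i j a, f i = some a → f j = some a → i = j

open scoped Classical in
/-- `p_n(α,β) = Σ_ψ α^{N(ψ)} β^{K(ψ)}` over partial permutations `ψ` of `{1,…,n}`,
with `α = X 0` and `β = X 1`. -/
noncomputable def pPoly (n : ℕ) : MvPolynomial (Fin 2) ℚ :=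
  ∑ f : Fin n → Option (Fin n),
    if IsPartialPerm f then
      MvPolynomial.X 0 ^ numNecklacesPP f * MvPolynomial.X 1 ^ numCyclesPP f
    else 0

namespace PPaux

open scoped Classical

/-- reachability in the functional graph -/
def Reach {n : ℕ} (f : Fin n → Option (Fin n)) (i j : Fin n) : Prop :=
  ∃ k : ℕ, (optStep f)^[k] (some i) = some j

/-- the representative predicate used in `numCyclesPP` -/
def Rep {n : ℕ} (f : Fin n → Option (Fin n)) (i : Fin n) : Prop :=
  isCyclic f i ∧ ∀ j : Fin n, (∃ k : ℕ, (optStep f)^[k] (some i) = some j) → i ≤ j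

variable {m : ℕ}

def up : Option (Fin m) → Option (Fin (m + 1)) := Option.map Fin.castSucc

def down : Option (Fin (m + 1)) → Option (Fin m) := fun o =>
  o.bind fun j => if h : j = Fin.last m then none else some (j.castPred h)

def splice (F : Fin (m + 1) → Option (Fin (m + 1))) : Fin m → Option (Fin m) := fun i =>
  if F i.castSucc = some (Fin.last m) then down (F (Fin.last m)) else down (F i.castSucc)

@[simp] lemma down_up (o : Option (Fin m)) : down (up o) = o := by
  cases o with
  | none => rfl
  | some x =>
    simp only [up, down, Option.map_some, Option.bind_some]
    rw [dif_neg ((Fin.castSucc_lt_last x).ne)]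
    simp

lemma up_ne_last (o : Option (Fin m)) : up o ≠ some (Fin.last m) := by
  cases o with
  | none => simp [up]
  | some x => simpa [up] using (Fin.castSucc_lt_last x).ne

lemma down_eq_some {o : Option (Fin (m + 1))} {x : Fin m} :
    down o = some x ↔ o = some x.castSucc := by
  cases o with
  | none => simp [down]
  | some y =>
    simp only [down, Option.bind_some]
    by_cases h : y = Fin.last m
    · subst h
      simp only [dif_pos rfl]
      constructor
      · intro h; exact absurd h (by simp)
      · intro h; exact absurd ((Option.some_injective _ h).symm) ((Fin.castSucc_lt_last x).ne)
    · rw [dif_neg h]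
      constructor
      · intro hx
        have := Option.some_injective _ hx
        subst this
        simp [Fin.castSucc_castPred]
      · intro hx
        have := Option.some_injective _ hx
        subst this
        simp [Fin.castPred_castSucc]

lemma down_eq_none {o : Option (Fin (m + 1))} :
    down o = none ↔ o = none ∨ o = some (Fin.last m) := by
  cases o with
  | none => simp [down]
  | some y =>
    simp only [down, Option.bind_some]
    by_cases h : y = Fin.last m
    · subst h; simp
    · rw [dif_neg h]; simp [h]

lemma up_down {o : Option (Fin (m + 1))} (h : o ≠ some (Fin.last m)) : up (down o) = o := by
  cases o with
  | none => rfl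
  | some y =>
    have hy : y ≠ Fin.last m := fun hh => h (by rw [hh])
    simp only [down, Option.bind_some, dif_neg hy, up, Option.map_some]
    rw [Fin.castSucc_castPred]

@[simp] lemma iterate_none {n : ℕ} (f : Fin n → Option (Fin n)) (k : ℕ) :
    (optStep f)^[k] none = none := by
  induction k with
  | zero => rfl
  | succ k ih => rw [Function.iterate_succ_apply, optStep]; exact ih

lemma iterate_succ_some {n : ℕ} {f : Fin n → Option (Fin n)} {k : ℕ} {i j : Fin n}
    (h : (optStep f)^[k + 1] (some i) = some j) :
    ∃ i₁, f i = some i₁ ∧ (optStep f)^[k] (some i₁) = some j := by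
  rw [Function.iterate_succ_apply] at h
  have h1 : optStep f (some i) = f i := rfl
  rw [h1] at h
  cases hfi : f i with
  | none => rw [hfi] at h; simp at h
  | some i₁ => exact ⟨i₁, rfl, by rw [hfi] at h; exact h⟩

section Simulation

variable {F : Fin (m + 1) → Option (Fin (m + 1))}

lemma splice_step {i i₁ : Fin m} (h : splice F i = some i₁) :
    F i.castSucc = some i₁.castSucc ∨
      (F i.castSucc = some (Fin.last m) ∧ F (Fin.last m) = some i₁.castSucc) := by
  unfold splice at h
  by_cases hc : F i.castSucc = some (Fin.last m)
  · rw [if_pos hc] at h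
    exact Or.inr ⟨hc, down_eq_some.mp h⟩
  · rw [if_neg hc] at h
    exact Or.inl (down_eq_some.mp h)

lemma sim_fwd : ∀ (k : ℕ) (i j : Fin m), (optStep (splice F))^[k] (some i) = some j →
    ∃ k', k ≤ k' ∧ (optStep F)^[k'] (some i.castSucc) = some j.castSucc := by
  intro k
  induction k with
  | zero =>
    intro i j h
    refine ⟨0, le_refl _, ?_⟩
    simp only [Function.iterate_zero, id_eq] at h ⊢
    rw [Option.some_injective _ h]
  | succ k ih =>
    intro i j h
    obtain ⟨i₁, hstep, hrest⟩ := iterate_succ_some h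
    obtain ⟨k', hk', hF⟩ := ih i₁ j hrest
    rcases splice_step hstep with h1 | ⟨h1, h2⟩
    · refine ⟨k' + 1, by omega, ?_⟩
      rw [Function.iterate_succ_apply]
      have : optStep F (some i.castSucc) = some i₁.castSucc := by
        show F i.castSucc = _; rw [h1]
      rw [this]; exact hF
    · refine ⟨k' + 2, by omega, ?_⟩
      rw [Function.iterate_succ_apply, Function.iterate_succ_apply]
      have e1 : optStep F (some i.castSucc) = some (Fin.last m) := h1
      have e2 : optStep F (some (Fin.last m)) = some i₁.castSucc := h2
      rw [e1, e2]; exact hF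

lemma sim_bwd (hF : IsPartialPerm F) : ∀ (k' : ℕ) (i j : Fin m),
    (optStep F)^[k'] (some i.castSucc) = some j.castSucc →
    ∃ k, k ≤ k' ∧ (0 < k' → 0 < k) ∧ (optStep (splice F))^[k] (some i) = some j := by
  intro k'
  induction k' using Nat.strong_induction_on with
  | _ k' IH =>
  intro i j h
  match k' with
  | 0 =>
    refine ⟨0, le_refl _, by omega, ?_⟩
    simp only [Function.iterate_zero, id_eq] at h ⊢
    have := Option.some_injective _ h
    rw [Fin.castSucc_inj.mp this]
  | (k'' + 1) =>
    obtain ⟨x, hx, hrest⟩ := iterate_succ_some h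
    by_cases hxl : x = Fin.last m
    · subst hxl
      -- passed through the last element
      match k'' with
      | 0 =>
        simp only [Function.iterate_zero, id_eq] at hrest
        exact absurd (Option.some_injective _ hrest).symm (Fin.castSucc_lt_last j).ne
      | (k₃ + 1) =>
        obtain ⟨y, hy, hrest₂⟩ := iterate_succ_some hrest
        have hyl : y ≠ Fin.last m := by
          intro hh; subst hh
          exact absurd (hF _ _ _ hx hy) (Fin.castSucc_lt_last i).ne
        set y' := y.castPred hyl with hy'
        have hyy : y = y'.castSucc := by simp [hy', Fin.castSucc_castPred]
        rw [hyy] at hrest₂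
        obtain ⟨k, hk, hkpos, hres⟩ := IH k₃ (by omega) y' j hrest₂
        refine ⟨k + 1, by omega, by omega, ?_⟩
        rw [Function.iterate_succ_apply]
        have : optStep (splice F) (some i) = some y' := by
          show splice F i = some y'
          unfold splice
          rw [if_pos hx, hy, hyy]
          exact down_eq_some.mpr rfl
        rw [this]; exact hres
    · set x' := x.castPred hxl with hx'
      have hxx : x = x'.castSucc := by simp [hx', Fin.castSucc_castPred]
      rw [hxx] at hrest
      obtain ⟨k, hk, hkpos, hres⟩ := IH k'' (by omega) x' j hrest
      refine ⟨k + 1, by omega, by omega, ?_⟩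
      rw [Function.iterate_succ_apply]
      have : optStep (splice F) (some i) = some x' := by
        show splice F i = some x'
        unfold splice
        rw [if_neg (by rw [hx]; exact fun hh => hxl (Option.some_injective _ hh)), hx, hxx,
          down_eq_some]
      rw [this]; exact hres

end Simulation

section Counting

variable {F : Fin (m + 1) → Option (Fin (m + 1))}

lemma isCyclic_splice (hF : IsPartialPerm F) (i : Fin m) :
    isCyclic (splice F) i ↔ isCyclic F i.castSucc := by
  constructor
  · rintro ⟨k, hk, h⟩
    obtain ⟨k', hk', h'⟩ := sim_fwd k i i h
    exact ⟨k', by omega, h'⟩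
  · rintro ⟨k', hk', h'⟩
    obtain ⟨k, _, hkpos, h⟩ := sim_bwd hF k' i i h'
    exact ⟨k, hkpos hk', h⟩

lemma reach_splice (hF : IsPartialPerm F) (i j : Fin m) :
    Reach (splice F) i j ↔ Reach F i.castSucc j.castSucc := by
  constructor
  · rintro ⟨k, h⟩
    obtain ⟨k', _, h'⟩ := sim_fwd k i j h
    exact ⟨k', h'⟩
  · rintro ⟨k', h'⟩
    obtain ⟨k, _, _, h⟩ := sim_bwd hF k' i j h'
    exact ⟨k, h⟩

lemma rep_castSucc (hF : IsPartialPerm F) (i : Fin m) :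
    Rep F i.castSucc ↔ Rep (splice F) i := by
  constructor
  · rintro ⟨hc, hmin⟩
    refine ⟨(isCyclic_splice hF i).mpr hc, fun j hj => ?_⟩
    have := hmin j.castSucc ((reach_splice hF i j).mp hj)
    exact Fin.castSucc_le_castSucc_iff.mp this
  · rintro ⟨hc, hmin⟩
    refine ⟨(isCyclic_splice hF i).mp hc, fun j hj => ?_⟩
    rcases Fin.eq_castSucc_or_eq_last j with ⟨j', rfl⟩ | rfl
    · exact Fin.castSucc_le_castSucc_iff.mpr (hmin j' ((reach_splice hF i j').mpr hj))
    · exact Fin.le_last _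

lemma iterate_last_fixed (hfix : F (Fin.last m) = some (Fin.last m)) (k : ℕ) :
    (optStep F)^[k] (some (Fin.last m)) = some (Fin.last m) := by
  induction k with
  | zero => rfl
  | succ k ih =>
    rw [Function.iterate_succ_apply]
    have : optStep F (some (Fin.last m)) = some (Fin.last m) := hfix
    rw [this, ih]

lemma rep_last (hF : IsPartialPerm F) :
    Rep F (Fin.last m) ↔ F (Fin.last m) = some (Fin.last m) := by
  constructor
  · rintro ⟨⟨k, hk, hcyc⟩, hmin⟩
    obtain ⟨k₀, rfl⟩ : ∃ k₀, k = k₀ + 1 := ⟨k - 1, by omega⟩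
    obtain ⟨x, hx, -⟩ := iterate_succ_some hcyc
    have hreach : Reach F (Fin.last m) x := ⟨1, by
      simp only [Function.iterate_one]; exact hx⟩
    have := hmin x hreach
    have hxe : x = Fin.last m := le_antisymm (Fin.le_last x) this
    rw [hx, hxe]
  · intro hfix
    refine ⟨⟨1, one_pos, by simp only [Function.iterate_one]; exact hfix⟩, fun j hj => ?_⟩
    obtain ⟨k, hk⟩ := hj
    rw [iterate_last_fixed hfix k] at hk
    rw [← Option.some_injective _ hk]

lemma card_eq_sum_rep {n : ℕ} (f : Fin n → Option (Fin n)) :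
    numCyclesPP f = ∑ i : Fin n, if Rep f i then 1 else 0 := by
  rw [numCyclesPP, Nat.card_eq_fintype_card, Fintype.card_subtype, Finset.card_filter]
  exact Finset.sum_congr rfl fun i _ => if_congr Iff.rfl rfl rfl

lemma card_eq_sum_none {n : ℕ} (f : Fin n → Option (Fin n)) :
    numNecklacesPP f = ∑ i : Fin n, if f i = none then 1 else 0 := by
  rw [numNecklacesPP, Nat.card_eq_fintype_card, Fintype.card_subtype, Finset.card_filter]

lemma numCyclesPP_splice (hF : IsPartialPerm F) :
    numCyclesPP F = numCyclesPP (splice F) +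
      (if F (Fin.last m) = some (Fin.last m) then 1 else 0) := by
  rw [card_eq_sum_rep, card_eq_sum_rep, Fin.sum_univ_castSucc]
  congr 1
  · apply Finset.sum_congr rfl
    intro i _
    congr 1
    · exact propext (rep_castSucc hF i)
  · rw [if_congr (rep_last hF) rfl rfl]

lemma splice_eq_none_iff (hF : IsPartialPerm F) (i : Fin m) :
    splice F i = none ↔
      (F i.castSucc = none ∨ (F i.castSucc = some (Fin.last m) ∧ F (Fin.last m) = none)) := by
  unfold splice
  by_cases hc : F i.castSucc = some (Fin.last m)
  · rw [if_pos hc]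
    have hne : F (Fin.last m) ≠ some (Fin.last m) := by
      intro hh
      exact absurd (hF _ _ _ hc hh) (Fin.castSucc_lt_last i).ne
    rw [down_eq_none]
    simp [hc, hne]
  · rw [if_neg hc, down_eq_none]
    simp [hc]

lemma numNecklacesPP_splice (hF : IsPartialPerm F) :
    numNecklacesPP F = numNecklacesPP (splice F) +
      (if F (Fin.last m) = none ∧ ∀ i : Fin m, F i.castSucc ≠ some (Fin.last m)
        then 1 else 0) := by
  rw [card_eq_sum_none, card_eq_sum_none, Fin.sum_univ_castSucc]
  have key : ∀ i : Fin m, (if splice F i = none then 1 else 0) =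
      (if F i.castSucc = none then 1 else 0) +
      (if F i.castSucc = some (Fin.last m) ∧ F (Fin.last m) = none then (1:ℕ) else 0) := by
    intro i
    rw [if_congr (splice_eq_none_iff hF i) rfl rfl]
    by_cases h1 : F i.castSucc = none
    · have h2 : ¬ (F i.castSucc = some (Fin.last m) ∧ F (Fin.last m) = none) := by
        rintro ⟨hh, -⟩; rw [h1] at hh; exact absurd hh (by simp)
      simp [h1, h2]
    · by_cases h2 : F i.castSucc = some (Fin.last m) ∧ F (Fin.last m) = none
      · simp [h1, h2]
      · simp [h1, h2]
  rw [Finset.sum_congr rfl (fun i _ => key i), Finset.sum_add_distrib]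
  have last_split : (if F (Fin.last m) = none then (1:ℕ) else 0) =
      (∑ i : Fin m, if F i.castSucc = some (Fin.last m) ∧ F (Fin.last m) = none then 1 else 0) +
      (if F (Fin.last m) = none ∧ ∀ i : Fin m, F i.castSucc ≠ some (Fin.last m)
        then 1 else 0) := by
    by_cases hl : F (Fin.last m) = none
    · by_cases hex : ∃ i : Fin m, F i.castSucc = some (Fin.last m)
      · obtain ⟨i₀, hi₀⟩ := hex
        have hnall : ¬ (F (Fin.last m) = none ∧
            ∀ i : Fin m, F i.castSucc ≠ some (Fin.last m)) := by
          rintro ⟨-, hall⟩; exact hall i₀ hi₀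
        rw [if_pos hl, if_neg hnall, add_zero]
        rw [Finset.sum_eq_single i₀]
        · simp [hi₀, hl]
        · intro i _ hne
          rw [if_neg]
          rintro ⟨hh, -⟩
          exact hne (Fin.castSucc_inj.mp (hF _ _ _ hh hi₀))
        · intro hh; exact absurd (Finset.mem_univ i₀) hh
      · push_neg at hex
        rw [if_pos hl, if_pos ⟨hl, hex⟩,
          Finset.sum_eq_zero (fun i _ => by rw [if_neg]; rintro ⟨hh, -⟩; exact hex i hh)]
    · rw [if_neg hl, if_neg (by rintro ⟨hh, -⟩; exact hl hh)]
      rw [Finset.sum_eq_zero fun i _ => by rw [if_neg]; rintro ⟨-, hh⟩; exact hl hh]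
  rw [last_split]
  ring

end Counting

section Build

lemma isPartialPerm_splice {F : Fin (m + 1) → Option (Fin (m + 1))}
    (hF : IsPartialPerm F) : IsPartialPerm (splice F) := by
  intro i j a hi hj
  rcases splice_step hi with h1 | ⟨h1, h2⟩ <;> rcases splice_step hj with g1 | ⟨g1, g2⟩
  · exact Fin.castSucc_inj.mp (hF _ _ _ h1 g1)
  · exact absurd (hF _ _ _ h1 g2) (by simpa using (Fin.castSucc_lt_last i).ne)
  · exact absurd (hF _ _ _ g1 h2) (by simpa using (Fin.castSucc_lt_last j).ne)
  · exact Fin.castSucc_inj.mp (hF _ _ _ h1 g1)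

/-- validity of the parameters `(a, p)` for attaching the new top element:
`a` is the image of the top element, `p` is its preimage. -/
def valid (f : Fin m → Option (Fin m)) :
    Option (Fin (m + 1)) → Option (Fin m) → Prop
  | none, none => True
  | none, some i => f i = none
  | some a, none => a = Fin.last m ∨ ∀ i, f i ≠ down (some a)
  | some a, some i => a ≠ Fin.last m ∧ f i = down (some a)

/-- attach a new top element with image `a` and preimage `p` -/
def build (f : Fin m → Option (Fin m)) (a : Option (Fin (m + 1))) (p : Option (Fin m)) :
    Fin (m + 1) → Option (Fin (m + 1)) := fun x =>
  if h : x = Fin.last m then a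
  else if p = some (x.castPred h) then some (Fin.last m) else up (f (x.castPred h))

@[simp] lemma build_last (f : Fin m → Option (Fin m)) (a p) :
    build f a p (Fin.last m) = a := by simp [build]

lemma build_castSucc (f : Fin m → Option (Fin m)) (a p) (i : Fin m) :
    build f a p i.castSucc = if p = some i then some (Fin.last m) else up (f i) := by
  rw [build, dif_neg (Fin.castSucc_lt_last i).ne]
  simp [Fin.castPred_castSucc]
  by_cases h : p = some i <;> simp [h]

lemma build_castSucc_eq_last_iff (f : Fin m → Option (Fin m)) (a p) (i : Fin m) :
    build f a p i.castSucc = some (Fin.last m) ↔ p = some i := by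
  rw [build_castSucc]
  by_cases h : p = some i
  · simp [h]
  · simp [h, up_ne_last]

lemma splice_build {f : Fin m → Option (Fin m)} {a p} (hv : valid f a p) :
    splice (build f a p) = f := by
  funext i
  unfold splice
  rw [if_congr (build_castSucc_eq_last_iff f a p i) rfl rfl]
  by_cases h : p = some i
  · rw [if_pos h, build_last]
    subst h
    cases a with
    | none =>
      have hh : f i = none := hv
      rw [hh]; rfl
    | some a' => exact hv.2.symm
  · rw [if_neg h, build_castSucc, if_neg h, down_up]

lemma up_eq_some {o : Option (Fin m)} {c : Fin (m + 1)} (h : up o = some c) :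
    o = down (some c) := by rw [← h, down_up]

lemma mixed_clash {f : Fin m → Option (Fin m)} {a p} (hf : IsPartialPerm f)
    (hv : valid f a p) {c : Fin (m + 1)} {x' : Fin m}
    (hx : build f a p x'.castSucc = some c) (hy : build f a p (Fin.last m) = some c) :
    False := by
  rw [build_castSucc] at hx
  rw [build_last] at hy
  subst hy
  by_cases hxp : p = some x'
  · -- a = some last and p = some x' : valid fails
    rw [if_pos hxp] at hx
    have hc : c = Fin.last m := Option.some_injective _ hx.symm
    subst hc
    subst hxp
    exact hv.1 rfl
  · rw [if_neg hxp] at hx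
    have hcl : c ≠ Fin.last m := fun hh => up_ne_last _ (hh ▸ hx)
    have hfx : f x' = down (some c) := up_eq_some hx
    cases p with
    | none =>
      rcases hv with h | h
      · exact hcl h
      · exact h x' hfx
    | some q =>
      have hfq : f q = down (some c) := hv.2
      have hd : down (some c) = some (c.castPred hcl) := by
        simp [down, dif_neg hcl]
      exact hxp (by rw [hf x' q (c.castPred hcl) (hd ▸ hfx) (hd ▸ hfq)])

lemma isPartialPerm_build {f : Fin m → Option (Fin m)} {a p} (hf : IsPartialPerm f)
    (hv : valid f a p) : IsPartialPerm (build f a p) := by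
  intro x y c hx hy
  rcases Fin.eq_castSucc_or_eq_last x with ⟨x', rfl⟩ | rfl <;>
    rcases Fin.eq_castSucc_or_eq_last y with ⟨y', rfl⟩ | rfl
  · -- both castSucc
    rw [build_castSucc] at hx hy
    by_cases hxp : p = some x' <;> by_cases hyp : p = some y'
    · rw [Fin.castSucc_inj]
      exact Option.some_injective _ (hxp.symm.trans hyp)
    · rw [if_pos hxp] at hx
      rw [if_neg hyp] at hy
      exact absurd hx.symm (fun hh =>
        up_ne_last _ (hy.trans (Option.some_injective _ hh ▸ rfl)))
    · rw [if_neg hxp] at hx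
      rw [if_pos hyp] at hy
      exact absurd hy.symm (fun hh =>
        up_ne_last _ (hx.trans (Option.some_injective _ hh ▸ rfl)))
    · rw [if_neg hxp] at hx
      rw [if_neg hyp] at hy
      have h1 : f x' = down (some c) := up_eq_some hx
      have h2 : f y' = down (some c) := up_eq_some hy
      have hcl : c ≠ Fin.last m := fun hh => up_ne_last _ (hh ▸ hx)
      have hd : down (some c) = some (c.castPred hcl) := by
        simp [down, dif_neg hcl]
      rw [Fin.castSucc_inj]
      exact hf x' y' (c.castPred hcl) (hd ▸ h1) (hd ▸ h2)
  · exact absurd (mixed_clash hf hv hx hy) not_false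
  · exact absurd (mixed_clash hf hv hy hx) not_false
  · rfl

/-- the preimage of the top element, as an `Option` -/
noncomputable def pre (F : Fin (m + 1) → Option (Fin (m + 1))) : Option (Fin m) :=
  if h : ∃ i : Fin m, F i.castSucc = some (Fin.last m) then some h.choose else none

lemma pre_eq_some {F : Fin (m + 1) → Option (Fin (m + 1))} (hF : IsPartialPerm F)
    {i : Fin m} (hi : F i.castSucc = some (Fin.last m)) : pre F = some i := by
  have h : ∃ i : Fin m, F i.castSucc = some (Fin.last m) := ⟨i, hi⟩
  rw [pre, dif_pos h]
  congr 1
  exact Fin.castSucc_inj.mp (hF _ _ _ h.choose_spec hi)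

lemma pre_eq_none {F : Fin (m + 1) → Option (Fin (m + 1))}
    (h : ∀ i : Fin m, F i.castSucc ≠ some (Fin.last m)) : pre F = none := by
  rw [pre, dif_neg]
  push_neg
  exact h

lemma pre_spec {F : Fin (m + 1) → Option (Fin (m + 1))} {i : Fin m}
    (h : pre F = some i) : F i.castSucc = some (Fin.last m) := by
  rw [pre] at h
  by_cases hex : ∃ i : Fin m, F i.castSucc = some (Fin.last m)
  · rw [dif_pos hex] at h
    rw [← Option.some_injective _ h]
    exact hex.choose_spec
  · rw [dif_neg hex] at h
    exact absurd h (by simp)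

lemma build_splice {F : Fin (m + 1) → Option (Fin (m + 1))} (hF : IsPartialPerm F) :
    build (splice F) (F (Fin.last m)) (pre F) = F := by
  funext x
  rcases Fin.eq_castSucc_or_eq_last x with ⟨i, rfl⟩ | rfl
  · rw [build_castSucc]
    by_cases h : pre F = some i
    · rw [if_pos h, pre_spec h]
    · rw [if_neg h]
      have hne : F i.castSucc ≠ some (Fin.last m) := fun hh => h (pre_eq_some hF hh)
      have : splice F i = down (F i.castSucc) := by rw [splice, if_neg hne]
      rw [this, up_down hne]
  · rw [build_last]

lemma valid_of_pp {F : Fin (m + 1) → Option (Fin (m + 1))} (hF : IsPartialPerm F) :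
    valid (splice F) (F (Fin.last m)) (pre F) := by
  cases hl : F (Fin.last m) with
  | none =>
    cases hp : pre F with
    | none => trivial
    | some i =>
      show splice F i = none
      rw [splice, if_pos (pre_spec hp), hl]
      rfl
  | some a =>
    cases hp : pre F with
    | none =>
      show a = Fin.last m ∨ ∀ i, splice F i ≠ down (some a)
      by_cases hal : a = Fin.last m
      · exact Or.inl hal
      · refine Or.inr fun i hi => ?_
        have hne : F i.castSucc ≠ some (Fin.last m) := by
          intro hh
          rw [pre_eq_some hF hh] at hp
          exact absurd hp (by simp)
        rw [splice, if_neg hne] at hi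
        have hda : down (some a) = some (a.castPred hal) := by
          simp [down, dif_neg hal]
        rw [hda] at hi
        have : F i.castSucc = some a := by
          have := down_eq_some.mp hi
          rwa [Fin.castSucc_castPred] at this
        exact (Fin.castSucc_lt_last i).ne (hF _ _ _ this hl)
    | some i =>
      have hil : F i.castSucc = some (Fin.last m) := pre_spec hp
      constructor
      · intro hal
        subst hal
        exact (Fin.castSucc_lt_last i).ne (hF _ _ _ hil hl)
      · show splice F i = down (some a)
        rw [splice, if_pos hil, hl]

lemma build_fst {f : Fin m → Option (Fin m)} (a p) :
    build f a p (Fin.last m) = a := build_last f a p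

lemma pre_build {f : Fin m → Option (Fin m)} {a p} (hf : IsPartialPerm f)
    (hv : valid f a p) : pre (build f a p) = p := by
  cases p with
  | none =>
    apply pre_eq_none
    intro i hi
    simpa using (build_castSucc_eq_last_iff f a none i).mp hi
  | some i =>
    exact pre_eq_some (isPartialPerm_build hf hv)
      ((build_castSucc_eq_last_iff f a (some i) i).mpr rfl)

end Build

section Master

open MvPolynomial

local notation "Xp" => (MvPolynomial.X : Fin 2 → MvPolynomial (Fin 2) ℚ)

noncomputable def wt {n : ℕ} (f : Fin n → Option (Fin n)) : MvPolynomial (Fin 2) ℚ :=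
  if IsPartialPerm f then Xp 0 ^ numNecklacesPP f * Xp 1 ^ numCyclesPP f else 0

lemma pPoly_eq_sum_wt (n : ℕ) : pPoly n = ∑ f : Fin n → Option (Fin n), wt f := by
  rw [pPoly]
  refine Finset.sum_congr rfl fun f _ => ?_
  simp only [wt]

lemma down_castSucc (j : Fin m) : down (some j.castSucc) = some j := down_eq_some.mpr rfl

lemma key_count {n : ℕ} (f : Fin n → Option (Fin n)) (z : MvPolynomial (Fin 2) ℚ) :
    ∑ i : Fin n, (if f i = none then z else 0) =
      (numNecklacesPP f : MvPolynomial (Fin 2) ℚ) * z := by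
  have : ∀ i : Fin n, (if f i = none then z else 0) =
      (if f i = none then (1 : MvPolynomial (Fin 2) ℚ) else 0) * z := by
    intro i; split <;> simp
  rw [Finset.sum_congr rfl fun i _ => this i, ← Finset.sum_mul, card_eq_sum_none]
  congr 1
  rw [Nat.cast_sum]
  exact Finset.sum_congr rfl fun i _ => by split <;> simp

lemma fiber_sum (f : Fin m → Option (Fin m)) (hf : IsPartialPerm f) :
    ∑ F ∈ univ.filter (fun F => splice F = f), wt F =
      ((m : MvPolynomial (Fin 2) ℚ) + (numNecklacesPP f : MvPolynomial (Fin 2) ℚ)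
          + Xp 0 + Xp 1) *
        (Xp 0 ^ numNecklacesPP f * Xp 1 ^ numCyclesPP f) := by
  classical
  set N := numNecklacesPP f
  set K := numCyclesPP f
  set z : MvPolynomial (Fin 2) ℚ := Xp 0 ^ N * Xp 1 ^ K with hz
  have step1 : ∑ F ∈ univ.filter (fun F => splice F = f), wt F =
      ∑ F ∈ univ.filter (fun F => splice F = f ∧ IsPartialPerm F),
        Xp 0 ^ numNecklacesPP F * Xp 1 ^ numCyclesPP F := by
    rw [← Finset.filter_filter, Finset.sum_filter (p := fun F => IsPartialPerm F)]
    exact Finset.sum_congr rfl fun F _ => if_congr Iff.rfl rfl rfl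
  rw [step1]
  -- transport to the parameter space
  have step2 : ∑ F ∈ univ.filter (fun F => splice F = f ∧ IsPartialPerm F),
      Xp 0 ^ numNecklacesPP F * Xp 1 ^ numCyclesPP F =
      ∑ ap ∈ univ.filter (fun ap : Option (Fin (m + 1)) × Option (Fin m) =>
          valid f ap.1 ap.2),
        Xp 0 ^ (N + (if ap.1 = none ∧ ap.2 = none then 1 else 0)) *
          Xp 1 ^ (K + (if ap.1 = some (Fin.last m) then 1 else 0)) := by
    refine Finset.sum_nbij' (fun F => (F (Fin.last m), pre F))
      (fun ap => build f ap.1 ap.2) ?_ ?_ ?_ ?_ ?_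
    · intro F hF
      rw [Finset.mem_filter] at hF
      obtain ⟨-, hsp, hpp⟩ := hF
      rw [Finset.mem_filter]
      exact ⟨Finset.mem_univ _, hsp ▸ valid_of_pp hpp⟩
    · intro ap hap
      rw [Finset.mem_filter] at hap
      rw [Finset.mem_filter]
      exact ⟨Finset.mem_univ _,
        splice_build hap.2, isPartialPerm_build hf hap.2⟩
    · intro F hF
      rw [Finset.mem_filter] at hF
      obtain ⟨-, hsp, hpp⟩ := hF
      rw [← hsp]
      exact build_splice hpp
    · intro ap hap
      rw [Finset.mem_filter] at hap
      have h1 := build_last f ap.1 ap.2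
      have h2 := pre_build hf hap.2
      show (build f ap.1 ap.2 (Fin.last m), pre (build f ap.1 ap.2)) = ap
      rw [h1, h2]
    · intro F hF
      rw [Finset.mem_filter] at hF
      obtain ⟨-, hsp, hpp⟩ := hF
      have hN := numNecklacesPP_splice hpp
      have hK := numCyclesPP_splice hpp
      rw [hsp] at hN hK
      have hiff : (F (Fin.last m) = none ∧ ∀ i : Fin m, F i.castSucc ≠ some (Fin.last m)) ↔
          (F (Fin.last m) = none ∧ pre F = none) := by
        constructor
        · rintro ⟨h1, h2⟩
          exact ⟨h1, pre_eq_none h2⟩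
        · rintro ⟨h1, h2⟩
          exact ⟨h1, fun i hi => by rw [pre_eq_some hpp hi] at h2; exact absurd h2 (by simp)⟩
      have e1 : numNecklacesPP F =
          N + (if F (Fin.last m) = none ∧ pre F = none then 1 else 0) := by
        rw [hN]
        congr 1
        exact if_congr hiff rfl rfl
      show Xp 0 ^ numNecklacesPP F * Xp 1 ^ numCyclesPP F =
        Xp 0 ^ (N + (if F (Fin.last m) = none ∧ pre F = none then 1 else 0)) *
          Xp 1 ^ (K + (if F (Fin.last m) = some (Fin.last m) then 1 else 0))
      rw [e1, hK]
  rw [step2, Finset.sum_filter, Fintype.sum_prod_type, Fintype.sum_option]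
  -- the `a = none` column
  have colnone : (∑ p : Option (Fin m),
      if valid f none p then
        Xp 0 ^ (N + (if (none : Option (Fin (m+1))) = none ∧ p = none then 1 else 0)) *
          Xp 1 ^ (K + (if (none : Option (Fin (m+1))) = some (Fin.last m) then 1 else 0))
      else 0) = Xp 0 ^ (N + 1) * Xp 1 ^ K + (N : MvPolynomial (Fin 2) ℚ) * z := by
    rw [Fintype.sum_option]
    congr 1
    · have hv : valid f none none := trivial
      simp [hv, z]
    · have : ∀ i : Fin m, (if valid f none (some i) then
          Xp 0 ^ (N + (if (none : Option (Fin (m+1))) = none ∧ (some i : Option (Fin m)) = none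
            then 1 else 0)) *
            Xp 1 ^ (K + (if (none : Option (Fin (m+1))) = some (Fin.last m) then 1 else 0))
          else 0) = (if f i = none then z else 0) := by
        intro i
        have hvi : valid f none (some i) ↔ f i = none := Iff.rfl
        rw [if_congr hvi rfl rfl]
        simp [z]
      rw [Finset.sum_congr rfl fun i _ => this i, key_count]
  rw [colnone]
  -- the `a = some x` columns
  have colsome : (∑ x : Fin (m + 1), ∑ p : Option (Fin m),
      if valid f (some x) p then
        Xp 0 ^ (N + (if (some x : Option (Fin (m+1))) = none ∧ p = none then 1 else 0)) *
          Xp 1 ^ (K + (if (some x : Option (Fin (m+1))) = some (Fin.last m) then 1 else 0))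
      else 0) = (m : MvPolynomial (Fin 2) ℚ) * z + Xp 0 ^ N * Xp 1 ^ (K + 1) := by
    rw [Fin.sum_univ_castSucc]
    congr 1
    · -- x = castSucc j
      have inner : ∀ j : Fin m, (∑ p : Option (Fin m),
          if valid f (some j.castSucc) p then
            Xp 0 ^ (N + (if (some j.castSucc : Option (Fin (m+1))) = none ∧ p = none
              then 1 else 0)) *
              Xp 1 ^ (K + (if (some j.castSucc : Option (Fin (m+1))) = some (Fin.last m)
                then 1 else 0))
          else 0) = z := by
        intro j
        have hxl : (j.castSucc : Fin (m + 1)) ≠ Fin.last m := (Fin.castSucc_lt_last j).ne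
        have hc1 : ((some j.castSucc : Option (Fin (m+1))) = none ∧ False) = False := by simp
        have e1 : ∀ p : Option (Fin m),
            (if valid f (some j.castSucc) p then
              Xp 0 ^ (N + (if (some j.castSucc : Option (Fin (m+1))) = none ∧ p = none
                then 1 else 0)) *
                Xp 1 ^ (K + (if (some j.castSucc : Option (Fin (m+1))) = some (Fin.last m)
                  then 1 else 0))
            else 0) = (if valid f (some j.castSucc) p then z else 0) := by
          intro p
          have c1 : ¬ ((some j.castSucc : Option (Fin (m+1))) = none ∧ p = none) := by simp
          have c2 : (some j.castSucc : Option (Fin (m+1))) ≠ some (Fin.last m) := by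
            simpa using hxl
          rw [if_neg c1, if_neg c2]
          simp [z]
        rw [Finset.sum_congr rfl fun p _ => e1 p, Fintype.sum_option]
        by_cases hex : ∃ i, f i = some j
        · obtain ⟨i₀, hi₀⟩ := hex
          have hvn : ¬ valid f (some j.castSucc) none := by
            rintro (h | h)
            · exact hxl h
            · rw [down_castSucc] at h
              exact h i₀ hi₀
          rw [if_neg hvn, zero_add]
          rw [Finset.sum_eq_single i₀]
          · have hv : valid f (some j.castSucc) (some i₀) := by
              refine ⟨hxl, ?_⟩
              rw [down_castSucc]
              exact hi₀
            rw [if_pos hv]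
          · intro i _ hne
            rw [if_neg]
            rintro ⟨-, hh⟩
            rw [down_castSucc] at hh
            exact hne (hf _ _ _ hh hi₀)
          · intro h; exact absurd (Finset.mem_univ i₀) h
        · push_neg at hex
          have hvn : valid f (some j.castSucc) none := by
            refine Or.inr fun i => ?_
            rw [down_castSucc]
            exact hex i
          rw [if_pos hvn]
          rw [Finset.sum_eq_zero, add_zero]
          intro i _
          rw [if_neg]
          rintro ⟨-, hh⟩
          rw [down_castSucc] at hh
          exact hex i hh
      rw [Finset.sum_congr rfl fun j _ => inner j, Finset.sum_const, Finset.card_univ,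
        Fintype.card_fin, nsmul_eq_mul]
    · -- x = last
      rw [Fintype.sum_option]
      have hvn : valid f (some (Fin.last m)) none := Or.inl rfl
      have e0 : (if valid f (some (Fin.last m)) none then
          Xp 0 ^ (N + (if (some (Fin.last m) : Option (Fin (m+1))) = none ∧
            (none : Option (Fin m)) = none then 1 else 0)) *
            Xp 1 ^ (K + (if (some (Fin.last m) : Option (Fin (m+1))) = some (Fin.last m)
              then 1 else 0))
          else 0) = Xp 0 ^ N * Xp 1 ^ (K + 1) := by
        rw [if_pos hvn]
        simp
      rw [e0, Finset.sum_eq_zero, add_zero]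
      intro i _
      rw [if_neg]
      rintro ⟨hh, -⟩
      exact hh rfl
  rw [colsome]
  rw [hz]
  push_cast
  ring

lemma master (m : ℕ) :
    pPoly (m + 1) = ∑ f : Fin m → Option (Fin m),
      (if IsPartialPerm f then
        ((m : MvPolynomial (Fin 2) ℚ) + (numNecklacesPP f : MvPolynomial (Fin 2) ℚ)
            + Xp 0 + Xp 1) *
          (Xp 0 ^ numNecklacesPP f * Xp 1 ^ numCyclesPP f) else 0) := by
  rw [pPoly_eq_sum_wt, ← Finset.sum_fiberwise univ splice wt]
  apply Finset.sum_congr rfl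
  intro f _
  by_cases hf : IsPartialPerm f
  · rw [if_pos hf, fiber_sum f hf]
  · rw [if_neg hf]
    apply Finset.sum_eq_zero
    intro F hF
    rw [Finset.mem_filter] at hF
    rw [wt, if_neg]
    intro hpp
    exact hf (hF.2 ▸ isPartialPerm_splice hpp)

end Master

section Algebra

open MvPolynomial

local notation "Xq" => (MvPolynomial.X : Fin 2 → MvPolynomial (Fin 2) ℚ)
local notation "Cq" => (MvPolynomial.C : ℚ →+* MvPolynomial (Fin 2) ℚ)

/-- the operator `α ∂/∂α` -/
noncomputable def Dt (q : MvPolynomial (Fin 2) ℚ) : MvPolynomial (Fin 2) ℚ :=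
  Xq 0 * pderiv 0 q

lemma Dt_add (a b : MvPolynomial (Fin 2) ℚ) : Dt (a + b) = Dt a + Dt b := by
  simp [Dt, mul_add]

lemma Dt_sub (a b : MvPolynomial (Fin 2) ℚ) : Dt (a - b) = Dt a - Dt b := by
  simp [Dt, mul_sub]

lemma Dt_mul (a b : MvPolynomial (Fin 2) ℚ) : Dt (a * b) = a * Dt b + b * Dt a := by
  simp only [Dt, pderiv_mul]
  ring

lemma Dt_C (r : ℚ) : Dt (Cq r) = 0 := by simp [Dt]

lemma Dt_one : Dt 1 = 0 := by simp [Dt]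

lemma Dt_X0 : Dt (Xq 0) = Xq 0 := by simp [Dt, pderiv_X_self]

lemma Dt_X1 : Dt (Xq 1) = 0 := by
  rw [Dt, pderiv_X_of_ne (by decide), mul_zero]

lemma Dt_natCast (n : ℕ) : Dt ((n : MvPolynomial (Fin 2) ℚ)) = 0 := by
  rw [← map_natCast Cq n, Dt_C]

lemma Dt_monomial (N K : ℕ) :
    Dt (Xq 0 ^ N * Xq 1 ^ K) = (N : MvPolynomial (Fin 2) ℚ) * (Xq 0 ^ N * Xq 1 ^ K) := by
  rw [Dt, pderiv_mul, pderiv_pow, pderiv_pow, pderiv_X_self, pderiv_X_of_ne (by decide)]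
  cases N with
  | zero => simp
  | succ N =>
    simp only [mul_zero, zero_mul, mul_one, add_zero, Nat.add_sub_cancel]
    push_cast
    ring

lemma Dt_sum {ι : Type*} (s : Finset ι) (g : ι → MvPolynomial (Fin 2) ℚ) :
    Dt (∑ i ∈ s, g i) = ∑ i ∈ s, Dt (g i) := by
  simp only [Dt, map_sum, Finset.mul_sum]

lemma pPoly_zero : pPoly 0 = 1 := by
  rw [pPoly]
  have key : ∀ f : Fin 0 → Option (Fin 0),
      (if IsPartialPerm f then
        MvPolynomial.X 0 ^ numNecklacesPP f * MvPolynomial.X 1 ^ numCyclesPP f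
      else 0 : MvPolynomial (Fin 2) ℚ) = 1 := by
    intro f
    have hpp : IsPartialPerm f := fun i => i.elim0
    have h1 : numNecklacesPP f = 0 := by
      rw [numNecklacesPP, Nat.card_eq_fintype_card, Fintype.card_eq_zero]
    have h2 : numCyclesPP f = 0 := by
      rw [numCyclesPP, Nat.card_eq_fintype_card, Fintype.card_eq_zero]
    rw [h1, h2, pow_zero, pow_zero, mul_one]
    exact if_pos hpp
  rw [Finset.sum_congr rfl fun f _ => key f]
  simp

lemma L1 (m : ℕ) :
    pPoly (m + 1) = (Cq (m : ℚ) + Xq 0 + Xq 1) * pPoly m + Dt (pPoly m) := by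
  rw [master, pPoly_eq_sum_wt m, Finset.mul_sum, Dt_sum, ← Finset.sum_add_distrib]
  refine Finset.sum_congr rfl fun f _ => ?_
  by_cases hf : IsPartialPerm f
  · rw [if_pos hf, wt, if_pos hf, Dt_monomial, map_natCast Cq]
    ring
  · rw [if_neg hf, wt, if_neg hf, mul_zero, Dt, map_zero, mul_zero, add_zero]

set_option maxHeartbeats 1000000 in
lemma L2 : ∀ m : ℕ, Dt (pPoly (m + 1)) =
    Cq ((m : ℚ) + 1) * pPoly (m + 1) - Cq ((m : ℚ) + 1) * (Cq (m : ℚ) + Xq 1) * pPoly m := by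
  intro m
  induction m using Nat.strong_induction_on with
  | _ m IH =>
  match m with
  | 0 =>
    have h1 : pPoly 1 = Xq 0 + Xq 1 := by
      rw [L1 0, pPoly_zero, Dt_one]
      simp
    rw [h1, pPoly_zero, Dt_add, Dt_X0, Dt_X1]
    simp only [Nat.cast_zero, map_zero, map_one, zero_add, map_add]
    ring
  | (n + 1) =>
    have ihn := IH n (by omega)
    have haux : Dt (pPoly (n + 1)) = Dt (pPoly (n + 1)) := rfl
    have hL1n : pPoly (n + 2) = (Cq ((n : ℚ) + 1) + Xq 0 + Xq 1) * pPoly (n + 1) +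
        Dt (pPoly (n + 1)) := by
      have := L1 (n + 1)
      rwa [Nat.cast_add, Nat.cast_one] at this
    -- Dt of the `n` level polynomial
    have hDn : Dt (pPoly n) = Cq (n : ℚ) * pPoly n -
        Cq (n : ℚ) * (Cq ((n : ℚ) - 1) + Xq 1) * pPoly (n - 1) := by
      match n with
      | 0 => rw [pPoly_zero, Dt_one]; simp
      | (k + 1) =>
        have ihk := IH k (by omega)
        have e : ((k : ℚ) + 1) - 1 = (k : ℚ) := by ring
        rw [show k + 1 - 1 = k from rfl, Nat.cast_add, Nat.cast_one, e]
        exact ihk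
    -- L1 at level n to relate pPoly (n+1) with pPoly n
    have hL1 : pPoly (n + 1) = (Cq (n : ℚ) + Xq 0 + Xq 1) * pPoly n + Dt (pPoly n) :=
      L1 n
    -- now compute
    have hzero : Dt (Cq ((n : ℚ) + 1) * (Cq (n : ℚ) + Xq 1)) = 0 := by
      rw [Dt_mul, Dt_add, Dt_C, Dt_C, Dt_X1]
      ring
    have hc2 : ((n + 1 : ℕ) : ℚ) + 1 = (n : ℚ) + 2 := by push_cast; ring
    have hc1 : ((n + 1 : ℕ) : ℚ) = (n : ℚ) + 1 := by push_cast; ring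
    rw [hL1n, Dt_add, Dt_mul, Dt_add, Dt_add, Dt_C, Dt_X0, Dt_X1, ihn, Dt_sub, Dt_mul,
      Dt_mul, Dt_C, hzero, ihn, hDn, hL1, hDn, hc2, hc1]
    simp only [map_add, map_one, map_sub, map_ofNat]
    ring

end Algebra

end PPaux

/-- `p_{n+1}(α,β) = (2n+α+β) p_n(α,β) - n(n+β-1) p_{n-1}(α,β)`,
with `p_{-1} = 0` and `p_0 = 1`.  The case `n = 0` (where `p_{-1} = 0`) reads
`p_1 = (α+β) p_0`, and the cases `n ≥ 1` are stated with shifted index. -/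
theorem partial_permutation_recursion :
    pPoly 0 = 1 ∧
    pPoly 1 = (MvPolynomial.X 0 + MvPolynomial.X 1) * pPoly 0 ∧
      ∀ n : ℕ, pPoly (n + 2) =
        (MvPolynomial.C (2 * (n : ℚ) + 2) + MvPolynomial.X 0 + MvPolynomial.X 1) *
            pPoly (n + 1) -
          MvPolynomial.C ((n : ℚ) + 1) * (MvPolynomial.C (n : ℚ) + MvPolynomial.X 1) *
            pPoly n := by
  refine ⟨PPaux.pPoly_zero, ?_, ?_⟩
  · rw [PPaux.L1 0, PPaux.pPoly_zero, PPaux.Dt_one]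
    simp
  · intro n
    have h1 := PPaux.L1 (n + 1)
    have h2 := PPaux.L2 n
    rw [h1, h2]
    have hc : ((n + 1 : ℕ) : ℚ) = (n : ℚ) + 1 := by push_cast; ring
    rw [hc]
    simp only [map_add, map_one, map_mul, map_ofNat]
    ring
end

section
/- The number of partial permutations of {1,...,n} (injective partial self-maps, including the empty map) equals Σ_{k=0}^n C(n,k)² k!, and this equals p_n(1,1) where p_n is the necklace-and-cycle counting polynomial. -/
open Finset PowerSeries

def ppMap (n : ℕ) (p : Σ s : Finset (Fin n), (↥s ↪ Fin n)) :
    {f : Fin n → Option (Fin n) // IsPartialPerm f} :=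
  ⟨fun i => if h : i ∈ p.1 then some (p.2 ⟨i, h⟩) else none, by
    intro i j a hi hj
    dsimp only at hi hj
    by_cases h1 : i ∈ p.1
    · by_cases h2 : j ∈ p.1
      · rw [dif_pos h1, Option.some_inj] at hi
        rw [dif_pos h2, Option.some_inj] at hj
        have : p.2 ⟨i, h1⟩ = p.2 ⟨j, h2⟩ := by rw [hi, hj]
        exact congrArg Subtype.val (p.2.injective this)
      · rw [dif_neg h2] at hj; exact absurd hj (by simp)
    · rw [dif_neg h1] at hi; exact absurd hi (by simp)⟩

theorem ppMap_bij (n : ℕ) : Function.Bijective (ppMap n) := by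
  constructor
  · rintro ⟨s1, g1⟩ ⟨s2, g2⟩ h
    have h' : ∀ i, (ppMap n ⟨s1, g1⟩).1 i = (ppMap n ⟨s2, g2⟩).1 i := fun i =>
      congrFun (congrArg Subtype.val h) i
    have hs : s1 = s2 := by
      ext i
      have := h' i
      by_cases h1 : i ∈ s1 <;> by_cases h2 : i ∈ s2 <;>
        simp [ppMap, h1, h2] at this ⊢
    subst hs
    have hg : g1 = g2 := by
      ext ⟨i, hi⟩
      have := h' i
      simp only [ppMap, dif_pos hi, Option.some_inj] at this
      exact congrArg Fin.val this
    rw [hg]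
  · rintro ⟨f, hf⟩
    refine ⟨⟨univ.filter (fun i => (f i).isSome),
      ⟨fun i => (f i.1).get (by simpa using (mem_filter.mp i.2).2), ?_⟩⟩, ?_⟩
    · rintro ⟨i, hi⟩ ⟨j, hj⟩ h
      simp only at h
      have hi' : (f i).isSome := by simpa using hi
      have hj' : (f j).isSome := by simpa using hj
      refine Subtype.ext (hf i j _ (Option.eq_some_of_isSome hi') ?_)
      rw [Option.eq_some_of_isSome hj', Option.some_inj]
      exact h.symm
    · apply Subtype.ext
      funext i
      by_cases h : (f i).isSome
      · simp [ppMap, h]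
        exact Option.some_get h
      · simp only [ppMap, mem_filter, mem_univ, true_and]
        rw [dif_neg h]
        exact (Option.not_isSome_iff_eq_none.mp h).symm

theorem count_pp (n : ℕ) :
    Nat.card {f : Fin n → Option (Fin n) // IsPartialPerm f} =
      ∑ k ∈ Finset.range (n + 1), n.choose k ^ 2 * k.factorial := by
  classical
  rw [← Nat.card_eq_of_bijective (ppMap n) (ppMap_bij n), Nat.card_eq_fintype_card,
    Fintype.card_sigma]
  have h1 : ∀ s : Finset (Fin n), Fintype.card (↥s ↪ Fin n) = n.descFactorial s.card := by
    intro s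
    rw [Fintype.card_embedding_eq, Fintype.card_coe, Fintype.card_fin]
  simp_rw [h1]
  rw [← Finset.powerset_univ, Finset.powerset_card_disjiUnion]
  refine (Finset.sum_disjiUnion _ _ _).trans ?_
  rw [Finset.card_univ, Fintype.card_fin]
  refine Finset.sum_congr rfl fun k _ => ?_
  rw [Finset.sum_congr rfl (fun s hs => by
      rw [(Finset.mem_powersetCard.mp hs).2]),
    Finset.sum_const, Finset.card_powersetCard, Finset.card_univ, Fintype.card_fin,
    smul_eq_mul, Nat.descFactorial_eq_factorial_mul_choose]
  ring

/-- the number of partial permutations of `{1,…,n}` equals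
`Σ_{k=0}^n C(n,k)² k!`, and this equals `p_n(1,1)`. -/
theorem card_partial_permutations (n : ℕ) :
    Nat.card {f : Fin n → Option (Fin n) // IsPartialPerm f} =
        ∑ k ∈ Finset.range (n + 1), n.choose k ^ 2 * k.factorial ∧
      ((Nat.card {f : Fin n → Option (Fin n) // IsPartialPerm f} : ℚ)) =
        MvPolynomial.eval (fun _ => (1 : ℚ)) (pPoly n) := by
  classical
  refine ⟨count_pp n, ?_⟩
  rw [pPoly, map_sum]
  have this1 : ∀ f : Fin n → Option (Fin n),
      MvPolynomial.eval (fun _ : Fin 2 => (1 : ℚ))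
        (if IsPartialPerm f then
          MvPolynomial.X 0 ^ numNecklacesPP f * MvPolynomial.X 1 ^ numCyclesPP f else 0) =
        if IsPartialPerm f then (1 : ℚ) else 0 := by
    intro f
    split <;> simp
  refine Eq.trans ?_ (Finset.sum_congr rfl fun f _ => (this1 f).symm)
  simp [Finset.sum_boole, Nat.card_eq_fintype_card, Fintype.card_subtype]
end
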